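/- arXiv:1010.4381 — 4 statements merged into one kernel-verified Lean document; each statement's English description precedes it below -/
import Mathlib

section
/- Lemma (joint asymptotic independence, Section 7.4): Let Wₙ be random vectors in ℝ^l and Wₙ* random vectors in ℝ^k, defined on a common probability space (Ω, 𝓕, P); let Q be a probability measure on ℝ^l and Q* a probability measure on ℝ^k; let 𝓕ₙ ⊆ 𝓕 be σ-fields such that Wₙ is 𝓕ₙ-measurable. Suppose: (i) Wₙ converges in distribution to Q; (ii) there exist 𝓕ₙ-measurable random probability measures κₙ on ℝ^k that are versions of the conditional distribution of Wₙ* given 𝓕ₙ (i.e., for every bounded measurable g : ℝ^k → ℝ, E[g(Wₙ*) | 𝓕ₙ] = ∫ g dκₙ almost surely); and (iii) for every bounded continuous f : ℝ^k → ℝ, ∫ f dκₙ → ∫ f dQ* in probability. Then the pair (Wₙ, Wₙ*) converges in distribution to the product measure Q ⊗ Q* on ℝ^l × ℝ^k. -/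
open MeasureTheory ProbabilityTheory Filter
open Topology

/-- Convergence in distribution, tested against bounded continuous functions. -/
def TendstoInDistribution {Ω E : Type*} [MeasurableSpace Ω] [TopologicalSpace E]
    [MeasurableSpace E]
    (P : MeasureTheory.Measure Ω) (W : ℕ → Ω → E) (Q : MeasureTheory.Measure E) : Prop :=
  ∀ f : BoundedContinuousFunction E ℝ,
    Tendsto (fun n => ∫ ω, f (W n ω) ∂P) atTop (nhds (∫ x, f x ∂Q))





/-- A continuous bump: 1 on the ball of radius `R`, 0 outside radius `R+1`, values in `[0,1]`. -/
lemma exists_bump (E : Type*) [NormedAddCommGroup E] (R : ℝ) :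
    ∃ φ : BoundedContinuousFunction E ℝ,
      (∀ x, 0 ≤ φ x) ∧ (∀ x, φ x ≤ 1) ∧ (∀ x, ‖x‖ ≤ R → φ x = 1) ∧
      (∀ x, R + 1 ≤ ‖x‖ → φ x = 0) := by
  refine ⟨BoundedContinuousFunction.ofNormedAddCommGroup
      (fun x => max 0 (min 1 (R + 1 - ‖x‖)))
      (continuous_const.max (continuous_const.min (continuous_const.sub continuous_norm))) 1
      (fun x => ?_), fun x => le_max_left _ _, fun x => ?_, fun x => ?_, fun x => ?_⟩
  · rw [Real.norm_eq_abs, abs_le]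
    constructor
    · have := le_max_left (0:ℝ) (min 1 (R + 1 - ‖x‖)); linarith
    · exact max_le zero_le_one (min_le_left _ _)
  · exact max_le zero_le_one (min_le_left _ _)
  · intro h
    have h1 : (1:ℝ) ≤ R + 1 - ‖x‖ := by linarith
    show max 0 (min 1 (R + 1 - ‖x‖)) = 1
    rw [min_eq_left h1, max_eq_right zero_le_one]
  · intro h
    have h1 : R + 1 - ‖x‖ ≤ 0 := by linarith
    show max 0 (min 1 (R + 1 - ‖x‖)) = 0
    rw [max_eq_left]
    exact (min_le_right _ _).trans h1


lemma bump_int_ge {E : Type*} [NormedAddCommGroup E] [MeasurableSpace E] [OpensMeasurableSpace E]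
    (μ : Measure E) [IsProbabilityMeasure μ] {φ : BoundedContinuousFunction E ℝ} {R : ℝ}
    (h0 : ∀ x, 0 ≤ φ x) (hone : ∀ x, ‖x‖ ≤ R → φ x = 1) :
    (μ (Metric.closedBall 0 R)).toReal ≤ ∫ x, φ x ∂μ := by
  have hmeas : MeasurableSet (Metric.closedBall (0:E) R) := Metric.isClosed_closedBall.measurableSet
  have h1 : (μ (Metric.closedBall 0 R)).toReal
      = ∫ x, (Metric.closedBall (0:E) R).indicator (fun _ => (1:ℝ)) x ∂μ := by
    rw [integral_indicator_const _ hmeas, smul_eq_mul, mul_one]; rfl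
  rw [h1]
  refine integral_mono ((integrable_const (1:ℝ)).indicator hmeas) (φ.integrable μ) (fun x => ?_)
  by_cases hx : x ∈ Metric.closedBall (0:E) R
  · rw [Set.indicator_of_mem hx]
    exact le_of_eq (hone x (by simpa [mem_closedBall_zero_iff] using hx)).symm
  · rw [Set.indicator_of_notMem hx]
    exact h0 x

lemma bump_compl_le {E : Type*} [NormedAddCommGroup E] [MeasurableSpace E] [OpensMeasurableSpace E]
    (μ : Measure E) [IsProbabilityMeasure μ] {φ : BoundedContinuousFunction E ℝ} {R : ℝ}
    (h1 : ∀ x, φ x ≤ 1) (hzero : ∀ x, R + 1 ≤ ‖x‖ → φ x = 0) :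
    (μ (Metric.closedBall 0 (R+1))ᶜ).toReal ≤ 1 - ∫ x, φ x ∂μ := by
  have hmeas : MeasurableSet (Metric.closedBall (0:E) (R+1))ᶜ :=
    Metric.isClosed_closedBall.measurableSet.compl
  have he : (μ (Metric.closedBall 0 (R+1))ᶜ).toReal
      = ∫ x, (Metric.closedBall (0:E) (R+1))ᶜ.indicator (fun _ => (1:ℝ)) x ∂μ := by
    rw [integral_indicator_const _ hmeas, smul_eq_mul, mul_one]; rfl
  have he2 : (1:ℝ) - ∫ x, φ x ∂μ = ∫ x, (1 - φ x) ∂μ := by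
    rw [integral_sub (integrable_const 1) (φ.integrable μ), integral_const]
    simp
  rw [he, he2]
  refine integral_mono ((integrable_const (1:ℝ)).indicator hmeas)
    ((integrable_const (1:ℝ)).sub (φ.integrable μ)) (fun x => ?_)
  by_cases hx : x ∈ (Metric.closedBall (0:E) (R+1))ᶜ
  · rw [Set.indicator_of_mem hx]
    have : R + 1 ≤ ‖x‖ := by
      simp only [Set.mem_compl_iff, mem_closedBall_zero_iff, not_le] at hx
      linarith
    rw [hzero x this]; norm_num
  · rw [Set.indicator_of_notMem hx]
    have := h1 x; linarith


lemma key_diff {l k : ℕ} (f : BoundedContinuousFunction ((Fin l → ℝ) × (Fin k → ℝ)) ℝ)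
    (μ : Measure (Fin k → ℝ)) [IsProbabilityMeasure μ] {δ δ₂ RA RB : ℝ} (hδ : 0 ≤ δ)
    (huc : ∀ p ∈ (Metric.closedBall (0:Fin l → ℝ) RA) ×ˢ (Metric.closedBall (0:Fin k → ℝ) RB),
      ∀ q ∈ (Metric.closedBall (0:Fin l → ℝ) RA) ×ˢ (Metric.closedBall (0:Fin k → ℝ) RB),
      dist p q < δ₂ → |f p - f q| < δ)
    {x c : Fin l → ℝ} (hx : ‖x‖ ≤ RA) (hc : ‖c‖ ≤ RA) (hxc : dist x c < δ₂) :
    |(∫ y, f (x, y) ∂μ) - ∫ y, f (c, y) ∂μ| ≤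
      δ + 2 * ‖f‖ * (μ (Metric.closedBall 0 RB)ᶜ).toReal := by
  set K' := Metric.closedBall (0:Fin k → ℝ) RB with hK'
  have hK'meas : MeasurableSet K'ᶜ := Metric.isClosed_closedBall.measurableSet.compl
  have hgx : Integrable (fun y => f (x, y)) μ :=
    (f.compContinuous ⟨fun y => (x, y), (continuous_const.prodMk continuous_id)⟩).integrable μ
  have hgc : Integrable (fun y => f (c, y)) μ :=
    (f.compContinuous ⟨fun y => (c, y), (continuous_const.prodMk continuous_id)⟩).integrable μ
  have hsub : (∫ y, f (x, y) ∂μ) - ∫ y, f (c, y) ∂μ = ∫ y, (f (x, y) - f (c, y)) ∂μ :=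
    (integral_sub hgx hgc).symm
  rw [hsub]
  have hb : ∀ y, |f (x, y) - f (c, y)| ≤
      δ + (2 * ‖f‖) * K'ᶜ.indicator (fun _ => (1:ℝ)) y := by
    intro y
    by_cases hy : y ∈ K'
    · rw [Set.indicator_of_notMem (by simpa using hy)]
      have hp : (x, y) ∈ (Metric.closedBall (0:Fin l → ℝ) RA) ×ˢ K' :=
        ⟨by simpa [mem_closedBall_zero_iff] using hx, hy⟩
      have hq : (c, y) ∈ (Metric.closedBall (0:Fin l → ℝ) RA) ×ˢ K' :=
        ⟨by simpa [mem_closedBall_zero_iff] using hc, hy⟩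
      have hd : dist ((x, y) : (Fin l → ℝ) × (Fin k → ℝ)) (c, y) < δ₂ := by
        rw [Prod.dist_eq]
        simpa [max_eq_left dist_nonneg] using hxc
      have := huc _ hp _ hq hd
      simp only [mul_zero, add_zero]
      exact this.le
    · rw [Set.indicator_of_mem (by simpa using hy)]
      have h1 : |f (x, y)| ≤ ‖f‖ := by
        simpa [Real.norm_eq_abs] using f.norm_coe_le_norm (x, y)
      have h2 : |f (c, y)| ≤ ‖f‖ := by
        simpa [Real.norm_eq_abs] using f.norm_coe_le_norm (c, y)
      calc |f (x, y) - f (c, y)| ≤ |f (x, y)| + |f (c, y)| := abs_sub _ _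
        _ ≤ δ + (2 * ‖f‖) * 1 := by linarith
  have hboundint : Integrable
      (fun y => δ + (2 * ‖f‖) * K'ᶜ.indicator (fun _ => (1:ℝ)) y) μ :=
    (integrable_const δ).add (((integrable_const (1:ℝ)).indicator hK'meas).const_mul _)
  calc |∫ y, (f (x, y) - f (c, y)) ∂μ| ≤ ∫ y, |f (x, y) - f (c, y)| ∂μ := by
        simpa [Real.norm_eq_abs] using
          norm_integral_le_integral_norm (μ := μ) (f := fun y => f (x, y) - f (c, y))
    _ ≤ ∫ y, (δ + (2 * ‖f‖) * K'ᶜ.indicator (fun _ => (1:ℝ)) y) ∂μ :=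
        integral_mono_of_nonneg (Filter.Eventually.of_forall fun y => abs_nonneg _)
          hboundint (Filter.Eventually.of_forall hb)
    _ = δ + 2 * ‖f‖ * (μ K'ᶜ).toReal := by
        rw [integral_add (integrable_const δ)
          (((integrable_const (1:ℝ)).indicator hK'meas).const_mul _),
          integral_const, integral_const_mul, integral_indicator_const _ hK'meas]
        simp [Measure.real]


lemma cond_law_integral {Ω : Type*} [m : MeasurableSpace Ω] (P : Measure Ω)
    [IsProbabilityMeasure P] {l k : ℕ}
    (W : Ω → (Fin l → ℝ)) (Wstar : Ω → (Fin k → ℝ))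
    (F : ℕ → MeasurableSpace Ω) (n : ℕ) (hF : F n ≤ m)
    (hWmeas : Measurable[F n] W) (hWstarmeas : Measurable Wstar)
    (κ : Ω → Measure (Fin k → ℝ)) (hκprob : ∀ ω, IsProbabilityMeasure (κ ω))
    (hκm : ∀ B : Set (Fin k → ℝ), MeasurableSet B → Measurable[F n] (fun ω => κ ω B))
    (hκcond : ∀ g : (Fin k → ℝ) → ℝ, Measurable g → (∃ C, ∀ x, |g x| ≤ C) →
      P[(fun ω => g (Wstar ω))|F n] =ᵐ[P] fun ω => ∫ x, g x ∂(κ ω))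
    (f : BoundedContinuousFunction ((Fin l → ℝ) × (Fin k → ℝ)) ℝ) :
    ∫ ω, f (W ω, Wstar ω) ∂P = ∫ ω, ∫ y, f (W ω, y) ∂(κ ω) ∂P := by
  have hWm : Measurable W := hWmeas.mono hF le_rfl
  -- the kernel
  set η : Kernel Ω (Fin k → ℝ) :=
    ⟨κ, Measure.measurable_of_measurable_coe _ fun B hB => (hκm B hB).mono hF le_rfl⟩ with hη
  haveI : IsMarkovKernel η := ⟨fun ω => hκprob ω⟩
  have hηeq : ∀ ω, η ω = κ ω := fun _ => rfl
  -- the pair map is measurable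
  have hpair : Measurable (fun ω => (W ω, Wstar ω)) := hWm.prodMk hWstarmeas
  have hproj : Measurable (fun p : Ω × (Fin k → ℝ) => (W p.1, p.2)) :=
    (hWm.comp measurable_fst).prodMk measurable_snd
  haveI : IsProbabilityMeasure (P ⊗ₘ η) :=
    ⟨by rw [Measure.compProd_apply_univ]; exact measure_univ⟩
  -- the key rectangle identity
  have hrect : ∀ (A : Set (Fin l → ℝ)) (B : Set (Fin k → ℝ)), MeasurableSet A →
      MeasurableSet B → P (W ⁻¹' A ∩ Wstar ⁻¹' B) = ∫⁻ ω in W ⁻¹' A, κ ω B ∂P := by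
    intro A B hA hB
    have hsA : MeasurableSet[F n] (W ⁻¹' A) := hWmeas hA
    have hsA' : MeasurableSet (W ⁻¹' A) := hF _ hsA
    have hsB : MeasurableSet (Wstar ⁻¹' B) := hWstarmeas hB
    -- conditional expectation of the indicator
    have hgmeas : Measurable (B.indicator (fun _ => (1:ℝ))) :=
      measurable_const.indicator hB
    have hgbd : ∃ C, ∀ x, |B.indicator (fun _ => (1:ℝ)) x| ≤ C :=
      ⟨1, fun x => by by_cases hx : x ∈ B <;> simp [Set.indicator_apply, hx]⟩
    have hcond := hκcond _ hgmeas hgbd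
    have hcomp : (fun ω => B.indicator (fun _ => (1:ℝ)) (Wstar ω))
        = (Wstar ⁻¹' B).indicator (fun _ => (1:ℝ)) := by
      ext ω; by_cases h : Wstar ω ∈ B <;> simp [Set.indicator_apply, h]
    have hint : Integrable (fun ω => B.indicator (fun _ => (1:ℝ)) (Wstar ω)) P := by
      rw [hcomp]; exact (integrable_const (1:ℝ)).indicator hsB
    have e1 : ∫ ω in W ⁻¹' A, (P[(fun ω => B.indicator (fun _ => (1:ℝ)) (Wstar ω))|F n]) ω ∂P
        = ∫ ω in W ⁻¹' A, B.indicator (fun _ => (1:ℝ)) (Wstar ω) ∂P :=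
      setIntegral_condExp hF hint hsA
    -- RHS of e1
    have e2 : ∫ ω in W ⁻¹' A, B.indicator (fun _ => (1:ℝ)) (Wstar ω) ∂P
        = (P (W ⁻¹' A ∩ Wstar ⁻¹' B)).toReal := by
      rw [hcomp, setIntegral_indicator hsB, setIntegral_const, smul_eq_mul, mul_one]; rfl
    -- LHS of e1
    have e3 : ∫ ω in W ⁻¹' A, (P[(fun ω => B.indicator (fun _ => (1:ℝ)) (Wstar ω))|F n]) ω ∂P
        = ∫ ω in W ⁻¹' A, (κ ω B).toReal ∂P := by
      refine integral_congr_ae (ae_restrict_of_ae (hcond.mono fun ω hω => ?_))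
      dsimp only at hω ⊢
      rw [hω, integral_indicator_const _ hB, smul_eq_mul, mul_one]; rfl
    have hκmeasm : Measurable (fun ω => κ ω B) := (hκm B hB).mono hF le_rfl
    have e4 : ∫ ω in W ⁻¹' A, (κ ω B).toReal ∂P
        = (∫⁻ ω in W ⁻¹' A, κ ω B ∂P).toReal := by
      refine integral_toReal (hκmeasm.aemeasurable.restrict) ?_
      exact Filter.Eventually.of_forall fun ω => by
        haveI := hκprob ω; exact measure_lt_top _ _
    have hfin1 : P (W ⁻¹' A ∩ Wstar ⁻¹' B) ≠ ⊤ := measure_ne_top _ _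
    have hfin2 : (∫⁻ ω in W ⁻¹' A, κ ω B ∂P) ≠ ⊤ := by
      refine ne_top_of_le_ne_top (measure_ne_top P (W ⁻¹' A)) ?_
      calc ∫⁻ ω in W ⁻¹' A, κ ω B ∂P ≤ ∫⁻ _ in W ⁻¹' A, 1 ∂P :=
            lintegral_mono fun ω => by haveI := hκprob ω; exact prob_le_one
        _ = P (W ⁻¹' A) := by simp
    refine (ENNReal.toReal_eq_toReal_iff' hfin1 hfin2).mp ?_
    rw [← e2, ← e1, e3, e4]
  -- equality of the two joint laws
  have hmap : P.map (fun ω => (W ω, Wstar ω)) = (P ⊗ₘ η).map (fun p => (W p.1, p.2)) := by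
    haveI : IsProbabilityMeasure (P.map (fun ω => (W ω, Wstar ω))) :=
      Measure.isProbabilityMeasure_map hpair.aemeasurable
    refine ext_of_generate_finite _ generateFrom_prod.symm isPiSystem_prod ?_ ?_
    · rintro s ⟨A, hA, B, hB, rfl⟩
      simp only [Set.mem_setOf_eq] at hA hB
      rw [Measure.map_apply hpair (hA.prod hB), Measure.map_apply hproj (hA.prod hB)]
      have h1 : (fun ω => (W ω, Wstar ω)) ⁻¹' (A ×ˢ B) = W ⁻¹' A ∩ Wstar ⁻¹' B :=
        Set.mk_preimage_prod W Wstar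
      have h2 : (fun p : Ω × (Fin k → ℝ) => (W p.1, p.2)) ⁻¹' (A ×ˢ B)
          = (W ⁻¹' A) ×ˢ B := by
        ext p; simp [Set.mem_prod]
      rw [h1, h2, Measure.compProd_apply_prod (hWm hA) hB, hrect A B hA hB]
      rfl
    · rw [Measure.map_apply hpair MeasurableSet.univ, Measure.map_apply hproj
        MeasurableSet.univ]
      simp
  -- conclude
  have hfint : Integrable (fun p : Ω × (Fin k → ℝ) => f (W p.1, p.2)) (P ⊗ₘ η) :=
    ⟨(f.continuous.measurable.comp hproj).aestronglyMeasurable,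
      HasFiniteIntegral.of_bounded (C := ‖f‖)
        (Filter.Eventually.of_forall fun p => f.norm_coe_le_norm _)⟩
  calc ∫ ω, f (W ω, Wstar ω) ∂P
      = ∫ p, f p ∂(P.map fun ω => (W ω, Wstar ω)) :=
        (integral_map hpair.aemeasurable f.continuous.aestronglyMeasurable).symm
    _ = ∫ p, f p ∂((P ⊗ₘ η).map fun p => (W p.1, p.2)) := by rw [hmap]
    _ = ∫ p, f (W p.1, p.2) ∂(P ⊗ₘ η) :=
        integral_map hproj.aemeasurable f.continuous.aestronglyMeasurable
    _ = ∫ ω, ∫ y, f (W ω, y) ∂(η ω) ∂P := Measure.integral_compProd hfint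
    _ = ∫ ω, ∫ y, f (W ω, y) ∂(κ ω) ∂P := by simp only [hηeq]


lemma exists_radius {E : Type*} [NormedAddCommGroup E] [MeasurableSpace E]
    [OpensMeasurableSpace E] (μ : Measure E) [IsProbabilityMeasure μ] {δ : ℝ} (hδ : 0 < δ) :
    ∃ R : ℝ, 1 - δ ≤ (μ (Metric.closedBall 0 R)).toReal := by
  have hmono : Monotone (fun j : ℕ => Metric.closedBall (0:E) j) := fun i j hij =>
    Metric.closedBall_subset_closedBall (by exact_mod_cast hij)
  have htend := tendsto_measure_iUnion_atTop (μ := μ) hmono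
  have hun : ⋃ j : ℕ, Metric.closedBall (0:E) j = Set.univ := by
    ext x
    simp only [Set.mem_iUnion, Set.mem_univ, iff_true, mem_closedBall_zero_iff]
    exact exists_nat_ge ‖x‖
  rw [hun] at htend
  have h1 := (ENNReal.tendsto_toReal (a := μ Set.univ) (by simp)).comp htend
  have h2 : ∀ᶠ j : ℕ in atTop, 1 - δ < (μ (Metric.closedBall (0:E) j)).toReal := by
    refine h1.eventually (lt_mem_nhds ?_)
    simp [measure_univ]
    linarith
  obtain ⟨j, hj⟩ := h2.exists
  exact ⟨j, hj.le⟩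

set_option maxHeartbeats 2000000 in
/-- Lemma on joint asymptotic independence (Section 7.4): if `Wₙ ⇒ Q`, `Wₙ` is
`𝓕ₙ`-measurable, and the conditional distribution of `Wₙ*` given `𝓕ₙ` converges in
probability to `Q*` (tested on bounded continuous functions), then
`(Wₙ, Wₙ*) ⇒ Q ⊗ Q*`. -/
theorem joint_asymptotic_independence
    {Ω : Type*} [m : MeasurableSpace Ω] (P : Measure Ω) [IsProbabilityMeasure P]
    (l k : ℕ)
    (W : ℕ → Ω → (Fin l → ℝ)) (Wstar : ℕ → Ω → (Fin k → ℝ))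
    (Q : Measure (Fin l → ℝ)) [IsProbabilityMeasure Q]
    (Qstar : Measure (Fin k → ℝ)) [IsProbabilityMeasure Qstar]
    (F : ℕ → MeasurableSpace Ω) (hF : ∀ n, F n ≤ m)
    (hWmeas : ∀ n, Measurable[F n] (W n))
    (hWstarmeas : ∀ n, Measurable (Wstar n))
    (hW : TendstoInDistribution P W Q)
    (κ : ℕ → Ω → Measure (Fin k → ℝ))
    (hκprob : ∀ n ω, IsProbabilityMeasure (κ n ω))
    (hκmeas : ∀ n, ∀ B : Set (Fin k → ℝ), MeasurableSet B →
        Measurable[F n] (fun ω => κ n ω B))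
    (hκcond : ∀ n, ∀ g : (Fin k → ℝ) → ℝ, Measurable g → (∃ C, ∀ x, |g x| ≤ C) →
        P[(fun ω => g (Wstar n ω))|F n] =ᵐ[P] fun ω => ∫ x, g x ∂(κ n ω))
    (hκtendsto : ∀ f : BoundedContinuousFunction (Fin k → ℝ) ℝ, ∀ δ > (0:ℝ),
        Tendsto (fun n =>
            P {ω | δ ≤ |(∫ x, f x ∂(κ n ω)) - ∫ x, f x ∂Qstar|})
          atTop (nhds 0)) :
    TendstoInDistribution P (fun n ω => (W n ω, Wstar n ω)) (Q.prod Qstar) := by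
  intro f
  classical
  have hM0 : (0:ℝ) ≤ ‖f‖ := norm_nonneg f
  have hWm : ∀ n, Measurable (W n) := fun n => (hWmeas n).mono (hF n) le_rfl
  -- kernels (for measurability of the random integrals)
  set η : ℕ → Kernel Ω (Fin k → ℝ) := fun n =>
    ⟨κ n, Measure.measurable_of_measurable_coe _ fun B hB =>
      (hκmeas n B hB).mono (hF n) le_rfl⟩ with hηdef
  haveI : ∀ n, IsMarkovKernel (η n) := fun n => ⟨fun ω => hκprob n ω⟩
  -- the limit function
  have hFcont : Continuous (fun x : Fin l → ℝ => ∫ y, f (x, y) ∂Qstar) := by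
    refine continuous_of_dominated ?_ ?_ (integrable_const ‖f‖) ?_
    · exact fun x => (f.continuous.comp (Continuous.prodMk_right x)).aestronglyMeasurable
    · exact fun x => Filter.Eventually.of_forall fun y => f.norm_coe_le_norm _
    · exact Filter.Eventually.of_forall fun y =>
        f.continuous.comp (continuous_id.prodMk continuous_const)
  have hFbd : ∀ x : Fin l → ℝ, ‖∫ y, f (x, y) ∂Qstar‖ ≤ ‖f‖ := fun x => by
    calc ‖∫ y, f (x, y) ∂Qstar‖ ≤ ‖f‖ * (Qstar Set.univ).toReal :=
          norm_integral_le_of_norm_le_const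
            (Filter.Eventually.of_forall fun y => f.norm_coe_le_norm _)
      _ = ‖f‖ := by simp
  set Fb : BoundedContinuousFunction (Fin l → ℝ) ℝ :=
    BoundedContinuousFunction.ofNormedAddCommGroup _ hFcont ‖f‖ hFbd with hFbdef
  have hFbeq : ∀ x, Fb x = ∫ y, f (x, y) ∂Qstar := fun x => rfl
  -- convergence of the second part
  have hJ : Tendsto (fun n => ∫ ω, Fb (W n ω) ∂P) atTop (𝓝 (∫ z, f z ∂(Q.prod Qstar))) := by
    have h1 := hW Fb
    have heq : ∫ x, Fb x ∂Q = ∫ z, f z ∂(Q.prod Qstar) :=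
      (integral_prod _ (f.integrable (Q.prod Qstar))).symm
    rwa [heq] at h1
  -- step 1 : replace Wstar by its conditional law
  set Φ : ℕ → Ω → ℝ := fun n ω => ∫ y, f (W n ω, y) ∂(κ n ω) with hΦdef
  have hstep1 : ∀ n, ∫ ω, f (W n ω, Wstar n ω) ∂P = ∫ ω, Φ n ω ∂P := fun n =>
    cond_law_integral P (W n) (Wstar n) F n (hF n) (hWmeas n) (hWstarmeas n)
      (κ n) (hκprob n) (hκmeas n) (hκcond n) f
  -- measurability and integrability of Φ
  have hΦsm : ∀ n, StronglyMeasurable (Φ n) := fun n =>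
    (f.continuous.stronglyMeasurable.comp_measurable
      (((hWm n).comp measurable_fst).prodMk measurable_snd)).integral_kernel_prod_right'
      (κ := η n)
  have hΦbd : ∀ n ω, |Φ n ω| ≤ ‖f‖ := fun n ω => by
    haveI := hκprob n ω
    rw [← Real.norm_eq_abs]
    calc ‖Φ n ω‖ ≤ ‖f‖ * ((κ n ω) Set.univ).toReal :=
          norm_integral_le_of_norm_le_const
            (Filter.Eventually.of_forall fun y => f.norm_coe_le_norm _)
      _ = ‖f‖ := by simp
  have hΦint : ∀ n, Integrable (Φ n) P := fun n =>
    ⟨(hΦsm n).aestronglyMeasurable, HasFiniteIntegral.of_bounded (C := ‖f‖)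
      (Filter.Eventually.of_forall fun ω => by
        simpa [Real.norm_eq_abs] using hΦbd n ω)⟩
  have hFWint : ∀ n, Integrable (fun ω => Fb (W n ω)) P := fun n =>
    ⟨(Fb.continuous.measurable.comp (hWm n)).aestronglyMeasurable,
      HasFiniteIntegral.of_bounded (C := ‖f‖)
        (Filter.Eventually.of_forall fun ω => hFbd _)⟩
  -- measurability of random integrals against κ
  have hIntMeas : ∀ (g : BoundedContinuousFunction (Fin k → ℝ) ℝ) (n : ℕ),
      Measurable (fun ω => ∫ x, g x ∂(κ n ω)) := fun g n =>
    ((g.continuous.stronglyMeasurable.comp_measurable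
      measurable_snd).integral_kernel_prod_right' (κ := η n)).measurable
  -- main quantitative estimate
  have main : ∀ δ : ℝ, 0 < δ → δ ≤ 1 → ∀ᶠ n in atTop,
      |(∫ ω, Φ n ω ∂P) - ∫ ω, Fb (W n ω) ∂P| ≤ (3 + 12 * ‖f‖) * δ := by
    intro δ hδ hδ1
    obtain ⟨R, hRQ⟩ := exists_radius Q hδ
    obtain ⟨R', hRQs⟩ := exists_radius Qstar hδ
    obtain ⟨φ, hφ0, hφ1, hφone, hφzero⟩ := exists_bump (Fin l → ℝ) R
    obtain ⟨ψ, hψ0, hψ1, hψone, hψzero⟩ := exists_bump (Fin k → ℝ) R'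
    set K := Metric.closedBall (0 : Fin l → ℝ) (R+1) with hKdef
    set K' := Metric.closedBall (0 : Fin k → ℝ) (R'+1) with hK'def
    have hψQs : 1 - δ ≤ ∫ y, ψ y ∂Qstar := le_trans hRQs (bump_int_ge Qstar hψ0 hψone)
    have hφQ : 1 - δ ≤ ∫ x, φ x ∂Q := le_trans hRQ (bump_int_ge Q hφ0 hφone)
    -- uniform continuity on a compact set
    have hScomp : IsCompact ((Metric.closedBall (0:Fin l → ℝ) (R+2)) ×ˢ K') :=
      (isCompact_closedBall _ _).prod (isCompact_closedBall _ _)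
    have huc0 := hScomp.uniformContinuousOn_of_continuous f.continuous.continuousOn
    obtain ⟨δ₂, hδ₂pos, hδ₂⟩ := Metric.uniformContinuousOn_iff.mp huc0 δ hδ
    have huc : ∀ p ∈ (Metric.closedBall (0:Fin l → ℝ) (R+2)) ×ˢ K',
        ∀ q ∈ (Metric.closedBall (0:Fin l → ℝ) (R+2)) ×ˢ K',
        dist p q < δ₂ → |f p - f q| < δ := by
      intro p hp q hq hpq
      have := hδ₂ p hp q hq hpq
      rwa [Real.dist_eq] at this
    -- finite cover of K
    obtain ⟨t, htK, htfin, htcover⟩ :=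
      (isCompact_closedBall (0:Fin l → ℝ) (R+1)).elim_finite_subcover_image
        (c := fun c => Metric.ball c δ₂) (fun c _ => Metric.isOpen_ball)
        (fun x hx => Set.mem_biUnion hx (Metric.mem_ball_self hδ₂pos))
    set T : Finset (Fin l → ℝ) := htfin.toFinset with hTdef
    -- slice functions
    set fc : (Fin l → ℝ) → BoundedContinuousFunction (Fin k → ℝ) ℝ := fun c =>
      f.compContinuous ⟨fun y => (c, y), continuous_const.prodMk continuous_id⟩ with hfcdef
    have hfceq : ∀ (c : Fin l → ℝ) (μ : Measure (Fin k → ℝ)),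
        ∫ x, (fc c) x ∂μ = ∫ y, f (c, y) ∂μ := fun c μ => rfl
    -- bad events
    set Bad1 : ℕ → Set Ω := fun n => (W n ⁻¹' K)ᶜ with hBad1def
    set BadΨ : ℕ → Set Ω := fun n =>
      {ω | δ ≤ |(∫ x, ψ x ∂(κ n ω)) - ∫ x, ψ x ∂Qstar|} with hBadΨdef
    set BadA : (Fin l → ℝ) → ℕ → Set Ω := fun c n =>
      {ω | δ ≤ |(∫ x, (fc c) x ∂(κ n ω)) - ∫ x, (fc c) x ∂Qstar|} with hBadAdef
    set bad : ℕ → Set Ω := fun n => Bad1 n ∪ (BadΨ n ∪ ⋃ c ∈ T, BadA c n) with hbaddef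
    have hBad1meas : ∀ n, MeasurableSet (Bad1 n) :=
      fun n => ((hWm n) measurableSet_closedBall).compl
    have hBadΨmeas : ∀ n, MeasurableSet (BadΨ n) := fun n =>
      measurableSet_le measurable_const (((hIntMeas ψ n).sub measurable_const).abs)
    have hBadAmeas : ∀ c n, MeasurableSet (BadA c n) := fun c n =>
      measurableSet_le measurable_const (((hIntMeas (fc c) n).sub measurable_const).abs)
    have hbadmeas : ∀ n, MeasurableSet (bad n) := fun n =>
      (hBad1meas n).union ((hBadΨmeas n).union
        (MeasurableSet.biUnion T.countable_toSet fun c _ => hBadAmeas c n))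
    -- pointwise estimate on the good set
    have hgood : ∀ n ω, ω ∉ bad n → |Φ n ω - Fb (W n ω)| ≤ 3*δ + 6*‖f‖*δ := by
      intro n ω hω
      haveI := hκprob n ω
      simp only [hbaddef, Set.mem_union, not_or, Set.mem_iUnion, not_exists] at hω
      obtain ⟨hω1, hω2, hω3⟩ := hω
      have hx : W n ω ∈ K := by
        have h := hω1
        simp only [hBad1def, Set.mem_compl_iff, not_not, Set.mem_preimage] at h
        exact h
      have hψκ : |(∫ x, ψ x ∂(κ n ω)) - ∫ x, ψ x ∂Qstar| < δ := by
        have h := hω2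
        simp only [hBadΨdef, Set.mem_setOf_eq, not_le] at h
        exact h
      have hκK' : ((κ n ω) K'ᶜ).toReal ≤ 2*δ := by
        have h1 := bump_compl_le (κ n ω) hψ1 hψzero
        have h2 := (abs_sub_lt_iff.mp hψκ).2
        rw [← hK'def] at h1
        linarith
      have hQsK' : (Qstar K'ᶜ).toReal ≤ δ := by
        have h1 := bump_compl_le Qstar hψ1 hψzero
        rw [← hK'def] at h1
        linarith
      obtain ⟨c, hct, hcball⟩ := Set.mem_iUnion₂.mp (htcover hx)
      have hcT : c ∈ T := htfin.mem_toFinset.mpr hct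
      have hcx : dist (W n ω) c < δ₂ := Metric.mem_ball.mp hcball
      have hxnorm : ‖W n ω‖ ≤ R + 2 := by
        have := mem_closedBall_zero_iff.mp hx; linarith
      have hcnorm : ‖c‖ ≤ R + 2 := by
        have := mem_closedBall_zero_iff.mp (htK hct); linarith
      have hT1 := key_diff f (κ n ω) hδ.le huc hxnorm hcnorm hcx
      have hT3 := key_diff f Qstar hδ.le huc hxnorm hcnorm hcx
      have hT2 : |(∫ y, f (c, y) ∂(κ n ω)) - ∫ y, f (c, y) ∂Qstar| < δ := by
        have h := hω3 c hcT
        simp only [hBadAdef, Set.mem_setOf_eq, not_le] at h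
        rwa [hfceq c (κ n ω), hfceq c Qstar] at h
      have hb1 : 2*‖f‖*(((κ n ω)) (Metric.closedBall 0 (R'+1))ᶜ).toReal ≤ 2*‖f‖*(2*δ) := by
        have : (((κ n ω)) (Metric.closedBall (0 : Fin k → ℝ) (R'+1))ᶜ).toReal ≤ 2*δ := by
          rw [← hK'def]; exact hκK'
        exact mul_le_mul_of_nonneg_left this (by positivity)
      have hb3 : 2*‖f‖*((Qstar) (Metric.closedBall 0 (R'+1))ᶜ).toReal ≤ 2*‖f‖*δ := by
        have : ((Qstar) (Metric.closedBall (0 : Fin k → ℝ) (R'+1))ᶜ).toReal ≤ δ := by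
          rw [← hK'def]; exact hQsK'
        exact mul_le_mul_of_nonneg_left this (by positivity)
      have habs : ∀ a b c d : ℝ, |a - d| ≤ |a-b| + |b-c| + |c-d| := by
        intro a b c d
        have h1 := abs_sub_le a b d
        have h2 := abs_sub_le b c d
        linarith
      have hdecomp : |Φ n ω - Fb (W n ω)| ≤
          |(∫ y, f (W n ω, y) ∂(κ n ω)) - ∫ y, f (c, y) ∂(κ n ω)|
          + |(∫ y, f (c, y) ∂(κ n ω)) - ∫ y, f (c, y) ∂Qstar|
          + |(∫ y, f (c, y) ∂Qstar) - ∫ y, f (W n ω, y) ∂Qstar| := by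
        have h0 : Φ n ω = ∫ y, f (W n ω, y) ∂(κ n ω) := rfl
        rw [h0, hFbeq]
        exact habs _ _ _ _
      have hT3' : |(∫ y, f (c, y) ∂Qstar) - ∫ y, f (W n ω, y) ∂Qstar|
          ≤ δ + 2 * ‖f‖ * (Qstar (Metric.closedBall 0 (R'+1))ᶜ).toReal := by
        rw [abs_sub_comm]; exact hT3
      calc |Φ n ω - Fb (W n ω)| ≤ _ := hdecomp
        _ ≤ 3*δ + 6*‖f‖*δ := by linarith [hT1, hT2.le, hT3']
    -- integral estimate, valid for every n
    have hEst : ∀ n, |(∫ ω, Φ n ω ∂P) - ∫ ω, Fb (W n ω) ∂P|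
        ≤ (3*δ + 6*‖f‖*δ) + (2*‖f‖) * (P (bad n)).toReal := by
      intro n
      have h0 : (∫ ω, Φ n ω ∂P) - ∫ ω, Fb (W n ω) ∂P
          = ∫ ω, (Φ n ω - Fb (W n ω)) ∂P := (integral_sub (hΦint n) (hFWint n)).symm
      rw [h0]
      have hboundint : Integrable
          (fun ω => (3*δ + 6*‖f‖*δ) + (2*‖f‖) * (bad n).indicator (fun _ => (1:ℝ)) ω) P :=
        (integrable_const _).add
          (((integrable_const (1:ℝ)).indicator (hbadmeas n)).const_mul _)
      have hptwise : ∀ ω, ‖Φ n ω - Fb (W n ω)‖ ≤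
          (3*δ + 6*‖f‖*δ) + (2*‖f‖) * (bad n).indicator (fun _ => (1:ℝ)) ω := by
        intro ω
        rw [Real.norm_eq_abs]
        by_cases hbadω : ω ∈ bad n
        · rw [Set.indicator_of_mem hbadω]
          have h1 := hΦbd n ω
          have h2 : |Fb (W n ω)| ≤ ‖f‖ := by
            rw [← Real.norm_eq_abs]; exact hFbd _
          have h3 := abs_sub (Φ n ω) (Fb (W n ω))
          nlinarith
        · rw [Set.indicator_of_notMem hbadω, mul_zero, add_zero]
          exact hgood n ω hbadω
      calc |∫ ω, (Φ n ω - Fb (W n ω)) ∂P| ≤ ∫ ω, ‖Φ n ω - Fb (W n ω)‖ ∂P := by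
            simpa [Real.norm_eq_abs] using norm_integral_le_integral_norm
              (μ := P) (f := fun ω => Φ n ω - Fb (W n ω))
        _ ≤ ∫ ω, ((3*δ + 6*‖f‖*δ) + (2*‖f‖) * (bad n).indicator (fun _ => (1:ℝ)) ω) ∂P :=
            integral_mono_of_nonneg (Filter.Eventually.of_forall fun ω => norm_nonneg _)
              hboundint (Filter.Eventually.of_forall hptwise)
        _ = (3*δ + 6*‖f‖*δ) + (2*‖f‖) * (P (bad n)).toReal := by
            rw [integral_add (integrable_const _)
              (((integrable_const (1:ℝ)).indicator (hbadmeas n)).const_mul _),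
              integral_const, integral_const_mul, integral_indicator_const _ (hbadmeas n)]
            simp [Measure.real]
    -- the bad events eventually have small probability
    have hEv1 : ∀ᶠ n in atTop, (P (Bad1 n)).toReal ≤ 2*δ := by
      have htend := hW φ
      have h2 : ∀ᶠ n in atTop, (∫ x, φ x ∂Q) - δ < ∫ ω, φ (W n ω) ∂P :=
        htend.eventually (lt_mem_nhds (by linarith))
      filter_upwards [h2] with n hn
      haveI : IsProbabilityMeasure (P.map (W n)) :=
        Measure.isProbabilityMeasure_map (hWm n).aemeasurable
      have hmapK : (P.map (W n)) (Metric.closedBall 0 (R+1))ᶜ = P (Bad1 n) := by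
        rw [Measure.map_apply (hWm n) measurableSet_closedBall.compl]
        have : Bad1 n = W n ⁻¹' (Metric.closedBall 0 (R+1))ᶜ := by
          rw [hBad1def, hKdef, Set.preimage_compl]
        rw [this]
      have hb := bump_compl_le (P.map (W n)) hφ1 hφzero
      have hcint : ∫ x, φ x ∂(P.map (W n)) = ∫ ω, φ (W n ω) ∂P :=
        integral_map (hWm n).aemeasurable φ.continuous.aestronglyMeasurable
      rw [hmapK, hcint] at hb
      linarith
    have hEvS : ∀ᶠ n in atTop,
        (P (BadΨ n)).toReal + ∑ c ∈ T, (P (BadA c n)).toReal < δ := by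
      have h1 : Tendsto (fun n => (P (BadΨ n)).toReal) atTop (𝓝 0) := by
        have := (ENNReal.tendsto_toReal (a := 0) (by simp)).comp (hκtendsto ψ δ hδ)
        rw [ENNReal.toReal_zero] at this; exact this
      have h2 : Tendsto (fun n => ∑ c ∈ T, (P (BadA c n)).toReal) atTop (𝓝 0) := by
        have hsum : Tendsto (fun n => ∑ c ∈ T, (P (BadA c n)).toReal) atTop
            (𝓝 (∑ _c ∈ T, (0:ℝ))) :=
          tendsto_finset_sum T fun c _ => by
            have := (ENNReal.tendsto_toReal (a := 0) (by simp)).comp (hκtendsto (fc c) δ hδ)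
            rw [ENNReal.toReal_zero] at this; exact this
        simpa using hsum
      have h3 := h1.add h2
      rw [add_zero] at h3
      exact h3.eventually_lt_const hδ
    have hPbad : ∀ n, (P (bad n)).toReal ≤
        (P (Bad1 n)).toReal + ((P (BadΨ n)).toReal + ∑ c ∈ T, (P (BadA c n)).toReal) := by
      intro n
      have hsumne : (∑ c ∈ T, P (BadA c n)) ≠ ⊤ :=
        (ENNReal.sum_lt_top.mpr fun c _ => measure_lt_top _ _).ne
      have hne2 : (P (BadΨ n) + ∑ c ∈ T, P (BadA c n)) ≠ ⊤ :=
        ENNReal.add_ne_top.mpr ⟨measure_ne_top _ _, hsumne⟩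
      have hne1 : (P (Bad1 n) + (P (BadΨ n) + ∑ c ∈ T, P (BadA c n))) ≠ ⊤ :=
        ENNReal.add_ne_top.mpr ⟨measure_ne_top _ _, hne2⟩
      have h1 : P (bad n) ≤ P (Bad1 n) + (P (BadΨ n) + ∑ c ∈ T, P (BadA c n)) :=
        (measure_union_le _ _).trans (add_le_add le_rfl
          ((measure_union_le _ _).trans (add_le_add le_rfl
            (measure_biUnion_finset_le _ _))))
      calc (P (bad n)).toReal
          ≤ (P (Bad1 n) + (P (BadΨ n) + ∑ c ∈ T, P (BadA c n))).toReal :=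
            ENNReal.toReal_mono hne1 h1
        _ = (P (Bad1 n)).toReal + ((P (BadΨ n)).toReal + ∑ c ∈ T, (P (BadA c n)).toReal) := by
            rw [ENNReal.toReal_add (measure_ne_top _ _) hne2,
              ENNReal.toReal_add (measure_ne_top _ _) hsumne,
              ENNReal.toReal_sum (fun c _ => measure_ne_top _ _)]
    filter_upwards [hEv1, hEvS] with n h1 h2
    have h3 : (P (bad n)).toReal ≤ 3*δ := le_trans (hPbad n) (by linarith)
    have h5 : (2*‖f‖) * (P (bad n)).toReal ≤ (2*‖f‖) * (3*δ) :=
      mul_le_mul_of_nonneg_left h3 (by positivity)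
    calc |(∫ ω, Φ n ω ∂P) - ∫ ω, Fb (W n ω) ∂P|
        ≤ (3*δ + 6*‖f‖*δ) + (2*‖f‖) * (P (bad n)).toReal := hEst n
      _ ≤ (3 + 12 * ‖f‖) * δ := by nlinarith
  -- conclude
  have hkey : Tendsto (fun n => (∫ ω, Φ n ω ∂P) - ∫ ω, Fb (W n ω) ∂P) atTop (𝓝 0) := by
    rw [NormedAddCommGroup.tendsto_nhds_zero]
    intro ε hε
    have hden : (0:ℝ) < 12*‖f‖ + 4 := by linarith
    have hδpos : 0 < min 1 (ε / (12*‖f‖+4)) := lt_min one_pos (div_pos hε hden)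
    filter_upwards [main _ hδpos (min_le_left _ _)] with n hn
    rw [Real.norm_eq_abs]
    have hstep : (3 + 12*‖f‖) * min 1 (ε / (12*‖f‖+4))
        ≤ (3 + 12*‖f‖) * (ε / (12*‖f‖+4)) :=
      mul_le_mul_of_nonneg_left (min_le_right _ _) (by linarith)
    have hlt : (3 + 12*‖f‖) * (ε / (12*‖f‖+4)) < (12*‖f‖+4) * (ε / (12*‖f‖+4)) :=
      mul_lt_mul_of_pos_right (by linarith) (div_pos hε hden)
    have heq : (12*‖f‖+4) * (ε / (12*‖f‖+4)) = ε := by field_simp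
    calc |(∫ ω, Φ n ω ∂P) - ∫ ω, Fb (W n ω) ∂P| ≤ _ := hn
      _ < ε := lt_of_le_of_lt hstep (hlt.trans_eq heq)
  have hconv := hkey.add hJ
  rw [zero_add] at hconv
  have hfinal : (fun n => ∫ ω, f (W n ω, Wstar n ω) ∂P)
      = fun n => ((∫ ω, Φ n ω ∂P) - ∫ ω, Fb (W n ω) ∂P) + ∫ ω, Fb (W n ω) ∂P := by
    funext n
    rw [hstep1 n]
    ring
  show Tendsto (fun n => ∫ ω, f (W n ω, Wstar n ω) ∂P) atTop
    (𝓝 (∫ z, f z ∂(Q.prod Qstar)))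
  rw [hfinal]
  exact hconv
end

section
/- Unique minimizer under small misspecification (Section 4.2): Fix H ∈ (0, 1/2] and θ₀ ∈ [0,1], and let f : [0,1] → ℝ be integrable with ∫₀¹ |f(t)| dt < 1/2. Define g(θ) = |θ − θ₀|^(2H) − ∫₀¹ f(t) [t^(2H) + θ^(2H) − |θ − t|^(2H)] dt for θ ∈ [0,1]. Then for every θ ∈ [0,1], g(θ) − g(θ₀) ≥ (1 − 2 ∫₀¹ |f(t)| dt) · |θ − θ₀|^(2H); in particular θ₀ is the unique minimizer of g on [0,1]. -/
open MeasureTheory Filter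

private lemma rpow_add_le_add_rpow_real {p a b : ℝ} (ha : 0 ≤ a) (hb : 0 ≤ b)
    (hp : 0 ≤ p) (hp1 : p ≤ 1) : (a + b) ^ p ≤ a ^ p + b ^ p := by
  have h := NNReal.rpow_add_le_add_rpow a.toNNReal b.toNNReal hp hp1
  have h2 : ((a.toNNReal + b.toNNReal : NNReal) : ℝ) ^ p
      ≤ ((a.toNNReal : ℝ)) ^ p + ((b.toNNReal : ℝ)) ^ p := by
    have := NNReal.coe_le_coe.2 h
    push_cast [NNReal.coe_rpow] at this
    simpa using this
  rwa [NNReal.coe_add, Real.coe_toNNReal a ha, Real.coe_toNNReal b hb] at h2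

private lemma abs_rpow_sub_rpow_le {p a b : ℝ} (ha : 0 ≤ a) (hb : 0 ≤ b)
    (hp0 : 0 < p) (hp1 : p ≤ 1) : |a ^ p - b ^ p| ≤ |a - b| ^ p := by
  wlog hab : b ≤ a generalizing a b
  · have := this hb ha (le_of_not_ge hab)
    rwa [abs_sub_comm (b ^ p) (a ^ p), abs_sub_comm b a] at this
  have hble : b ^ p ≤ a ^ p := Real.rpow_le_rpow hb hab hp0.le
  have key : a ^ p ≤ (a - b) ^ p + b ^ p := by
    have : a ^ p = ((a - b) + b) ^ p := by ring_nf
    rw [this]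
    exact rpow_add_le_add_rpow_real (by linarith) hb hp0.le hp1
  rw [abs_of_nonneg (by linarith), abs_of_nonneg (by linarith)]
  linarith

/-- Unique minimizer of the population criterion under small partial misspecification:
if `∫|f| < 1/2` and `H ∈ (0, 1/2]`, the criterion
`g(θ) = |θ−θ₀|^(2H) − ∫₀¹ f(t)[t^(2H) + θ^(2H) − |θ−t|^(2H)] dt`
satisfies `g(θ) − g(θ₀) ≥ (1 − 2∫|f|)|θ−θ₀|^(2H)`; in particular `θ₀` is its unique
minimizer on `[0,1]`. -/
theorem unique_minimizer_small_misspecification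
    (H : ℝ) (hH : 0 < H) (hH' : H ≤ 1/2) (θ₀ : ℝ) (hθ₀ : θ₀ ∈ Set.Icc (0:ℝ) 1)
    (f : ℝ → ℝ) (hf : IntegrableOn f (Set.Icc (0:ℝ) 1))
    (hfsmall : (∫ t in Set.Icc (0:ℝ) 1, |f t|) < 1/2)
    (g : ℝ → ℝ)
    (hg : ∀ θ, g θ = |θ - θ₀| ^ (2 * H)
        - ∫ t in Set.Icc (0:ℝ) 1, f t * (t ^ (2 * H) + θ ^ (2 * H) - |θ - t| ^ (2 * H))) :
    (∀ θ ∈ Set.Icc (0:ℝ) 1,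
        g θ - g θ₀ ≥ (1 - 2 * ∫ t in Set.Icc (0:ℝ) 1, |f t|) * |θ - θ₀| ^ (2 * H)) ∧
    (∀ θ ∈ Set.Icc (0:ℝ) 1, θ ≠ θ₀ → g θ₀ < g θ) := by
  set p : ℝ := 2 * H with hp_def
  have hp0 : 0 < p := by positivity
  have hp1 : p ≤ 1 := by rw [hp_def]; linarith
  set I : ℝ := ∫ t in Set.Icc (0:ℝ) 1, |f t| with hI_def
  -- measurability of the auxiliary functions
  have hmeas : ∀ θ : ℝ, AEStronglyMeasurable
      (fun t => f t * (t ^ p + θ ^ p - |θ - t| ^ p))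
      (volume.restrict (Set.Icc (0:ℝ) 1)) := by
    intro θ
    refine hf.aestronglyMeasurable.mul ?_
    refine Continuous.aestronglyMeasurable ?_
    exact ((Real.continuous_rpow_const hp0.le).add continuous_const).sub
      (((continuous_const.sub continuous_id).abs).rpow_const
        (fun x => Or.inr hp0.le))
  -- integrability for each θ ∈ [0,1]
  have hint : ∀ θ ∈ Set.Icc (0:ℝ) 1, IntegrableOn
      (fun t => f t * (t ^ p + θ ^ p - |θ - t| ^ p)) (Set.Icc (0:ℝ) 1) := by
    intro θ hθ
    refine Integrable.mono (hf.abs.const_mul 3) (hmeas θ) ?_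
    rw [ae_restrict_iff' measurableSet_Icc]
    refine Filter.Eventually.of_forall fun t ht => ?_
    obtain ⟨ht0, ht1⟩ := ht
    obtain ⟨hθ0, hθ1⟩ := hθ
    have h1 : t ^ p ≤ 1 := Real.rpow_le_one ht0 ht1 hp0.le
    have h2 : θ ^ p ≤ 1 := Real.rpow_le_one hθ0 hθ1 hp0.le
    have h3 : |θ - t| ^ p ≤ 1 :=
      Real.rpow_le_one (abs_nonneg _) (abs_le.2 ⟨by linarith, by linarith⟩) hp0.le
    have h1' : 0 ≤ t ^ p := Real.rpow_nonneg ht0 _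
    have h2' : 0 ≤ θ ^ p := Real.rpow_nonneg hθ0 _
    have h3' : 0 ≤ |θ - t| ^ p := Real.rpow_nonneg (abs_nonneg _) _
    have : |t ^ p + θ ^ p - |θ - t| ^ p| ≤ 3 := abs_le.2 ⟨by linarith, by linarith⟩
    calc ‖f t * (t ^ p + θ ^ p - |θ - t| ^ p)‖
        = |f t| * |t ^ p + θ ^ p - |θ - t| ^ p| := abs_mul _ _
      _ ≤ |f t| * 3 := mul_le_mul_of_nonneg_left this (abs_nonneg _)
      _ = 3 * |f t| := mul_comm _ _
      _ ≤ ‖3 * |f t|‖ := le_abs_self _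
  -- the key bound
  have main : ∀ θ ∈ Set.Icc (0:ℝ) 1, g θ - g θ₀ ≥ (1 - 2 * I) * |θ - θ₀| ^ p := by
    intro θ hθ
    set D : ℝ := |θ - θ₀| ^ p with hD_def
    have hD0 : 0 ≤ D := Real.rpow_nonneg (abs_nonneg _) _
    have hzero : |θ₀ - θ₀| ^ p = 0 := by
      simp [Real.zero_rpow hp0.ne']
    -- the difference of the two integrals
    have hdiff : (∫ t in Set.Icc (0:ℝ) 1, f t * (t ^ p + θ ^ p - |θ - t| ^ p))
        - (∫ t in Set.Icc (0:ℝ) 1, f t * (t ^ p + θ₀ ^ p - |θ₀ - t| ^ p))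
        = ∫ t in Set.Icc (0:ℝ) 1,
            f t * ((θ ^ p - θ₀ ^ p) - (|θ - t| ^ p - |θ₀ - t| ^ p)) := by
      rw [← integral_sub (hint θ hθ) (hint θ₀ hθ₀)]
      congr 1
      funext t
      ring
    -- pointwise bound on the integrand
    have hbound : ∀ᵐ t ∂(volume.restrict (Set.Icc (0:ℝ) 1)),
        ‖f t * ((θ ^ p - θ₀ ^ p) - (|θ - t| ^ p - |θ₀ - t| ^ p))‖ ≤ 2 * D * |f t| := by
      rw [ae_restrict_iff' measurableSet_Icc]
      refine Filter.Eventually.of_forall fun t ht => ?_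
      obtain ⟨hθ0, hθ1⟩ := hθ
      have e1 : |θ ^ p - θ₀ ^ p| ≤ D :=
        abs_rpow_sub_rpow_le hθ0 hθ₀.1 hp0 hp1
      have e2 : |(|θ - t|) ^ p - (|θ₀ - t|) ^ p| ≤ D := by
        refine le_trans (abs_rpow_sub_rpow_le (abs_nonneg _) (abs_nonneg _) hp0 hp1) ?_
        refine Real.rpow_le_rpow (abs_nonneg _) ?_ hp0.le
        have := abs_abs_sub_abs_le_abs_sub (θ - t) (θ₀ - t)
        simpa using this
      have : |(θ ^ p - θ₀ ^ p) - (|θ - t| ^ p - |θ₀ - t| ^ p)| ≤ 2 * D := by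
        calc |(θ ^ p - θ₀ ^ p) - (|θ - t| ^ p - |θ₀ - t| ^ p)|
            ≤ |θ ^ p - θ₀ ^ p| + |(|θ - t|) ^ p - (|θ₀ - t|) ^ p| := abs_sub _ _
          _ ≤ D + D := add_le_add e1 e2
          _ = 2 * D := by ring
      calc ‖f t * ((θ ^ p - θ₀ ^ p) - (|θ - t| ^ p - |θ₀ - t| ^ p))‖
          = |f t| * |(θ ^ p - θ₀ ^ p) - (|θ - t| ^ p - |θ₀ - t| ^ p)| := abs_mul _ _
        _ ≤ |f t| * (2 * D) := mul_le_mul_of_nonneg_left this (abs_nonneg _)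
        _ = 2 * D * |f t| := by ring
    have hIint : Integrable (fun t => 2 * D * |f t|)
        (volume.restrict (Set.Icc (0:ℝ) 1)) := hf.abs.const_mul _
    have habs : ‖∫ t in Set.Icc (0:ℝ) 1,
        f t * ((θ ^ p - θ₀ ^ p) - (|θ - t| ^ p - |θ₀ - t| ^ p))‖
        ≤ ∫ t in Set.Icc (0:ℝ) 1, 2 * D * |f t| :=
      norm_integral_le_of_norm_le hIint hbound
    have hIval : (∫ t in Set.Icc (0:ℝ) 1, 2 * D * |f t|) = 2 * D * I := by
      rw [hI_def, ← integral_const_mul]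
    rw [hIval] at habs
    have hle : (∫ t in Set.Icc (0:ℝ) 1,
        f t * ((θ ^ p - θ₀ ^ p) - (|θ - t| ^ p - |θ₀ - t| ^ p))) ≤ 2 * D * I :=
      le_trans (le_abs_self _) habs
    have : g θ - g θ₀ = D - (∫ t in Set.Icc (0:ℝ) 1,
        f t * ((θ ^ p - θ₀ ^ p) - (|θ - t| ^ p - |θ₀ - t| ^ p))) := by
      rw [hg θ, hg θ₀, hzero, ← hdiff]; ring
    rw [this]
    have : (1 - 2 * I) * D = D - 2 * D * I := by ring
    rw [this]
    linarith
  refine ⟨main, fun θ hθ hne => ?_⟩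
  have h1 := main θ hθ
  have hD : 0 < |θ - θ₀| ^ p :=
    Real.rpow_pos_of_pos (abs_pos.2 (sub_ne_zero.2 hne)) _
  have h2 : 0 < (1 - 2 * I) * |θ - θ₀| ^ p := by
    apply mul_pos _ hD
    rw [hI_def]
    linarith
  linarith
end

section
/- Unique and well-separated minimum of the population criterion (Section 7.1): Fix H ∈ (0,1), α₀ ∈ ℝ, β₀ ≠ 0, θ₀ ∈ (0,1), and define Φ : ℝ² × [0,1] → ℝ by Φ(α, β, θ) = (α₀ − α)² + (β₀ − β)² θ₀^(2H) + β β₀ |θ₀ − θ|^(2H) + β (β₀ − β)(θ₀^(2H) − θ^(2H)). Then: (i) Φ(α, β, θ) ≥ 0 for all (α, β, θ) ∈ ℝ² × [0,1], with equality if and only if (α, β, θ) = (α₀, β₀, θ₀); and (ii) for every open set G ⊆ ℝ³ containing (α₀, β₀, θ₀), the infimum of Φ over (ℝ² × [0,1]) \ G is strictly positive. -/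
open Filter

private lemma rpow_subadd {H : ℝ} (hH0 : 0 < H) (hH1 : H ≤ 1) {x y : ℝ}
    (hx : 0 ≤ x) (hy : 0 ≤ y) : (x + y) ^ H ≤ x ^ H + y ^ H := by
  rcases eq_or_lt_of_le hx with hx0 | hx0
  · simp [← hx0, Real.zero_rpow hH0.ne']
  rcases eq_or_lt_of_le hy with hy0 | hy0
  · simp [← hy0, Real.zero_rpow hH0.ne']
  have hxy : (0:ℝ) < x + y := by linarith
  have e : (x + y) ^ H = (x + y) ^ (H - 1) * (x + y) := by
    rw [← Real.rpow_add_one hxy.ne']; ring_nf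
  have ex : x ^ H = x ^ (H - 1) * x := by
    rw [← Real.rpow_add_one hx0.ne']; ring_nf
  have ey : y ^ H = y ^ (H - 1) * y := by
    rw [← Real.rpow_add_one hy0.ne']; ring_nf
  have h1 : (x + y) ^ (H - 1) ≤ x ^ (H - 1) :=
    Real.rpow_le_rpow_of_nonpos hx0 (by linarith) (by linarith)
  have h2 : (x + y) ^ (H - 1) ≤ y ^ (H - 1) :=
    Real.rpow_le_rpow_of_nonpos hy0 (by linarith) (by linarith)
  calc (x + y) ^ H = (x + y) ^ (H - 1) * x + (x + y) ^ (H - 1) * y := by rw [e]; ring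
    _ ≤ x ^ (H - 1) * x + y ^ (H - 1) * y := by gcongr
    _ = x ^ H + y ^ H := by rw [ex, ey]

private lemma rpow_subadd_strict {H : ℝ} (hH0 : 0 < H) (hH1 : H < 1) {x y : ℝ}
    (hx : 0 < x) (hy : 0 < y) : (x + y) ^ H < x ^ H + y ^ H := by
  have hxy : (0:ℝ) < x + y := by linarith
  have e : (x + y) ^ H = (x + y) ^ (H - 1) * (x + y) := by
    rw [← Real.rpow_add_one hxy.ne']; ring_nf
  have ex : x ^ H = x ^ (H - 1) * x := by
    rw [← Real.rpow_add_one hx.ne']; ring_nf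
  have ey : y ^ H = y ^ (H - 1) * y := by
    rw [← Real.rpow_add_one hy.ne']; ring_nf
  have h1 : (x + y) ^ (H - 1) < x ^ (H - 1) :=
    Real.rpow_lt_rpow_of_neg hx (by linarith) (by linarith)
  have h2 : (x + y) ^ (H - 1) < y ^ (H - 1) :=
    Real.rpow_lt_rpow_of_neg hy (by linarith) (by linarith)
  calc (x + y) ^ H = (x + y) ^ (H - 1) * x + (x + y) ^ (H - 1) * y := by rw [e]; ring
    _ < x ^ (H - 1) * x + y ^ (H - 1) * y := by
        apply add_lt_add <;> apply mul_lt_mul_of_pos_right <;> assumption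
    _ = x ^ H + y ^ H := by rw [ex, ey]

set_option maxHeartbeats 2000000 in
/-- Unique and well-separated minimum of the population least-squares criterion
`Φ(α,β,θ) = (α₀−α)² + (β₀−β)²θ₀^(2H) + ββ₀|θ₀−θ|^(2H) + β(β₀−β)(θ₀^(2H) − θ^(2H))`
in the point impact model. -/
theorem population_criterion_well_separated_min
    (H : ℝ) (hH : H ∈ Set.Ioo (0:ℝ) 1)
    (α₀ β₀ θ₀ : ℝ) (hβ₀ : β₀ ≠ 0) (hθ₀ : θ₀ ∈ Set.Ioo (0:ℝ) 1)
    (Φ : ℝ → ℝ → ℝ → ℝ)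
    (hΦ : ∀ α β θ, Φ α β θ = (α₀ - α) ^ 2 + (β₀ - β) ^ 2 * θ₀ ^ (2 * H)
        + β * β₀ * |θ₀ - θ| ^ (2 * H) + β * (β₀ - β) * (θ₀ ^ (2 * H) - θ ^ (2 * H))) :
    (∀ α β : ℝ, ∀ θ ∈ Set.Icc (0:ℝ) 1,
        0 ≤ Φ α β θ ∧ (Φ α β θ = 0 ↔ (α, β, θ) = (α₀, β₀, θ₀))) ∧
    (∀ G : Set (ℝ × ℝ × ℝ), IsOpen G → (α₀, β₀, θ₀) ∈ G →
        ∃ m > (0:ℝ), ∀ α β : ℝ, ∀ θ ∈ Set.Icc (0:ℝ) 1,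
          (α, β, θ) ∉ G → m ≤ Φ α β θ) := by
  obtain ⟨hH0, hH1⟩ := hH
  obtain ⟨hθ₀0, hθ₀1⟩ := hθ₀
  obtain ⟨u, hu_def⟩ : ∃ x : ℝ, x = θ₀ ^ H := ⟨_, rfl⟩
  obtain ⟨v, hv_app⟩ : ∃ f : ℝ → ℝ, ∀ θ, f θ = θ ^ H := ⟨_, fun _ => rfl⟩
  obtain ⟨w, hw_app⟩ : ∃ f : ℝ → ℝ, ∀ θ, f θ = |θ₀ - θ| ^ H := ⟨_, fun _ => rfl⟩
  obtain ⟨Q, hQ_app⟩ : ∃ f : ℝ → ℝ → ℝ, ∀ β θ, f β θ =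
      u ^ 2 * β₀ ^ 2 + (v θ) ^ 2 * β ^ 2 - β * β₀ * (u ^ 2 + (v θ) ^ 2 - (w θ) ^ 2) :=
    ⟨_, fun _ _ => rfl⟩
  -- square rewriting
  have esq : ∀ x : ℝ, 0 ≤ x → x ^ (2 * H) = (x ^ H) ^ 2 := by
    intro x hx
    rw [show (2:ℝ) * H = H * 2 by ring, Real.rpow_mul hx, Real.rpow_two]
  have hrw : ∀ α β θ, 0 ≤ θ → Φ α β θ = (α₀ - α) ^ 2 + Q β θ := by
    intro α β θ hθ
    rw [hΦ, esq θ₀ hθ₀0.le, esq θ hθ, esq _ (abs_nonneg _), hQ_app, hv_app, hw_app, hu_def]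
    ring
  -- basic facts
  have hu0 : 0 < u := hu_def ▸ Real.rpow_pos_of_pos hθ₀0 H
  have hu1 : u ≤ 1 := hu_def ▸ Real.rpow_le_one hθ₀0.le hθ₀1.le hH0.le
  have hv0 : ∀ θ, 0 ≤ θ → 0 ≤ v θ := fun θ hθ => hv_app θ ▸ Real.rpow_nonneg hθ H
  have hv1 : ∀ θ, 0 ≤ θ → θ ≤ 1 → v θ ≤ 1 := fun θ h0 h1 =>
    hv_app θ ▸ Real.rpow_le_one h0 h1 hH0.le
  have hw0 : ∀ θ, 0 ≤ w θ := fun θ => hw_app θ ▸ Real.rpow_nonneg (abs_nonneg _) H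
  have hw1 : ∀ θ, 0 ≤ θ → θ ≤ 1 → w θ ≤ 1 := by
    intro θ h0 h1
    rw [hw_app]
    apply Real.rpow_le_one (abs_nonneg _) _ hH0.le
    rw [abs_le]; constructor <;> linarith
  have hv_mono : ∀ {x y : ℝ}, 0 ≤ x → x ≤ y → x ^ H ≤ y ^ H :=
    fun hx hxy => Real.rpow_le_rpow hx hxy hH0.le
  -- triangle inequalities
  have tri1 : ∀ θ, 0 ≤ θ → w θ ≤ u + v θ := by
    intro θ hθ
    rcases le_total θ θ₀ with h | h
    · have : w θ ≤ u := by
        rw [hw_app, hu_def, abs_of_nonneg (by linarith)]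
        exact hv_mono (by linarith) (by linarith)
      linarith [hv0 θ hθ]
    · have : w θ ≤ v θ := by
        rw [hw_app, hv_app, abs_of_nonpos (by linarith),
          show -(θ₀ - θ) = θ - θ₀ from by ring]
        exact hv_mono (by linarith) (by linarith)
      linarith [hu0]
  have tri2 : ∀ θ, 0 ≤ θ → u ≤ w θ + v θ := by
    intro θ hθ
    rcases le_total θ θ₀ with h | h
    · have h5 := rpow_subadd hH0 hH1.le (x := θ₀ - θ) (y := θ) (by linarith) hθ
      rw [hw_app, hv_app, hu_def, abs_of_nonneg (by linarith)]
      calc θ₀ ^ H = ((θ₀ - θ) + θ) ^ H := by ring_nf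
        _ ≤ (θ₀ - θ) ^ H + θ ^ H := h5
    · have : u ≤ v θ := by rw [hu_def, hv_app]; exact hv_mono hθ₀0.le h
      linarith [hw0 θ]
  have tri3 : ∀ θ, 0 ≤ θ → v θ ≤ w θ + u := by
    intro θ hθ
    rcases le_total θ θ₀ with h | h
    · have : v θ ≤ u := by rw [hu_def, hv_app]; exact hv_mono hθ h
      linarith [hw0 θ]
    · have h5 := rpow_subadd hH0 hH1.le (x := θ - θ₀) (y := θ₀) (by linarith) hθ₀0.le
      rw [hw_app, hv_app, hu_def, abs_of_nonpos (by linarith),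
        show -(θ₀ - θ) = θ - θ₀ from by ring]
      calc θ ^ H = ((θ - θ₀) + θ₀) ^ H := by ring_nf
        _ ≤ (θ - θ₀) ^ H + θ₀ ^ H := h5
  -- nonnegativity of Q
  have hQnn : ∀ β θ, 0 ≤ θ → 0 ≤ Q β θ := by
    intro β θ hθ
    have h1 : (u - v θ) ^ 2 ≤ (w θ) ^ 2 := by
      nlinarith [tri2 θ hθ, tri3 θ hθ, hw0 θ]
    have h2 : (w θ) ^ 2 ≤ (u + v θ) ^ 2 := by
      nlinarith [tri1 θ hθ, hw0 θ, hu0, hv0 θ hθ]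
    rcases le_total 0 (β * β₀) with hs | hs
    · rw [hQ_app]
      nlinarith [sq_nonneg (u * β₀ - v θ * β), mul_nonneg hs (sub_nonneg.2 h1)]
    · rw [hQ_app]
      nlinarith [sq_nonneg (u * β₀ + v θ * β), mul_nonneg (neg_nonneg.2 hs) (sub_nonneg.2 h2)]
  -- strict positivity of Q away from θ₀
  have hQpos : ∀ β θ, 0 ≤ θ → θ ≤ 1 → θ ≠ θ₀ → 0 < Q β θ := by
    intro β θ hθ hθ1 hne
    rcases eq_or_lt_of_le hθ with h0 | h0
    · have hv' : v θ = 0 := by rw [hv_app, ← h0]; exact Real.zero_rpow hH0.ne'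
      have hw' : w θ = u := by rw [hw_app, ← h0, hu_def, sub_zero, abs_of_pos hθ₀0]
      rw [hQ_app, hv', hw']
      have h' : 0 < u ^ 2 * β₀ ^ 2 := by positivity
      nlinarith [h']
    · have hvp : 0 < v θ := hv_app θ ▸ Real.rpow_pos_of_pos h0 H
      have stri2 : u < w θ + v θ := by
        rcases lt_or_gt_of_ne hne with h | h
        · have h5 := rpow_subadd_strict hH0 hH1 (x := θ₀ - θ) (y := θ) (by linarith) h0
          rw [hw_app, hv_app, hu_def, abs_of_nonneg (by linarith)]
          calc θ₀ ^ H = ((θ₀ - θ) + θ) ^ H := by ring_nf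
            _ < (θ₀ - θ) ^ H + θ ^ H := h5
        · have h' : u < v θ := by
            rw [hu_def, hv_app]; exact Real.rpow_lt_rpow hθ₀0.le h hH0
          linarith [hw0 θ]
      have stri3 : v θ < w θ + u := by
        rcases lt_or_gt_of_ne hne with h | h
        · have h' : v θ < u := by
            rw [hu_def, hv_app]; exact Real.rpow_lt_rpow hθ h hH0
          linarith [hw0 θ]
        · have h5 := rpow_subadd_strict hH0 hH1 (x := θ - θ₀) (y := θ₀) (by linarith) hθ₀0
          rw [hw_app, hv_app, hu_def, abs_of_nonpos (by linarith),
            show -(θ₀ - θ) = θ - θ₀ from by ring]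
          calc θ ^ H = ((θ - θ₀) + θ₀) ^ H := by ring_nf
            _ < (θ - θ₀) ^ H + θ₀ ^ H := h5
      have stri1 : w θ < u + v θ := by
        rcases lt_or_gt_of_ne hne with h | h
        · have : w θ ≤ u := by
            rw [hw_app, hu_def, abs_of_nonneg (by linarith)]
            exact hv_mono (by linarith) (by linarith)
          linarith
        · have : w θ ≤ v θ := by
            rw [hw_app, hv_app, abs_of_nonpos (by linarith),
              show -(θ₀ - θ) = θ - θ₀ from by ring]
            exact hv_mono (by linarith) (by linarith)
          linarith
      have h1 : (u - v θ) ^ 2 < (w θ) ^ 2 := by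
        have := sq_lt_sq' (by linarith : -(w θ) < u - v θ) (by linarith : u - v θ < w θ)
        simpa using this
      have h2 : (w θ) ^ 2 < (u + v θ) ^ 2 := by
        have := sq_lt_sq' (by nlinarith [hw0 θ] : -(u + v θ) < w θ) stri1
        simpa using this
      have hb2 : 0 < β₀ ^ 2 := by positivity
      have key : 0 < β₀ ^ 2 * ((w θ) ^ 2 - (u - v θ) ^ 2) * ((u + v θ) ^ 2 - (w θ) ^ 2) :=
        mul_pos (mul_pos hb2 (by linarith)) (by linarith)
      have hv2 : 0 < (v θ) ^ 2 := by positivity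
      rw [hQ_app]
      nlinarith [sq_nonneg (2 * (v θ) ^ 2 * β - β₀ * (u ^ 2 + (v θ) ^ 2 - (w θ) ^ 2)), key,
        hv2, mul_pos hv2 hv2]
  -- values at θ₀
  have hvθ₀ : v θ₀ = u := by rw [hv_app, hu_def]
  have hwθ₀ : w θ₀ = 0 := by
    rw [hw_app, sub_self, abs_zero]; exact Real.zero_rpow hH0.ne'
  -- Part (i)
  have part1 : ∀ α β : ℝ, ∀ θ ∈ Set.Icc (0:ℝ) 1,
      0 ≤ Φ α β θ ∧ (Φ α β θ = 0 ↔ (α, β, θ) = (α₀, β₀, θ₀)) := by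
    intro α β θ hθmem
    obtain ⟨h0, h1⟩ := hθmem
    rw [hrw α β θ h0]
    refine ⟨by nlinarith [sq_nonneg (α₀ - α), hQnn β θ h0], ?_, ?_⟩
    · intro heq
      have hQ0 : Q β θ = 0 := by nlinarith [sq_nonneg (α₀ - α), hQnn β θ h0]
      have hα : α = α₀ := by nlinarith [hQnn β θ h0]
      have hθθ : θ = θ₀ := by
        by_contra hne
        exact absurd hQ0 (ne_of_gt (hQpos β θ h0 h1 hne))
      have hβ : β = β₀ := by
        rw [hθθ, hQ_app, hvθ₀, hwθ₀] at hQ0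
        have hsq : (β - β₀) ^ 2 ≤ 0 := by nlinarith [pow_pos hu0 2]
        have h2 : (β - β₀) ^ 2 = 0 := le_antisymm hsq (sq_nonneg _)
        have h3 := pow_eq_zero_iff (n := 2) (by norm_num) |>.1 h2
        linarith [sub_eq_zero.1 h3]
      rw [hα, hβ, hθθ]
    · intro heq
      obtain ⟨h1', h2', h3'⟩ : α = α₀ ∧ β = β₀ ∧ θ = θ₀ := by
        simpa [Prod.ext_iff] using heq
      subst h1'; subst h2'; subst h3'
      rw [hQ_app, hvθ₀, hwθ₀]
      ring
  refine ⟨part1, ?_⟩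
  -- Part (ii)
  intro G hG hmemG
  -- choice of δ
  obtain ⟨g, hg_app⟩ : ∃ f : ℝ → ℝ, ∀ d, f d = d ^ H + 2 * θ₀ ^ (H - 1) * d ^ (1 - H) :=
    ⟨_, fun _ => rfl⟩
  have hgc : ContinuousAt g 0 := by
    have : ContinuousAt (fun d : ℝ => d ^ H + 2 * θ₀ ^ (H - 1) * d ^ (1 - H)) 0 := by
      apply ContinuousAt.add
      · exact Real.continuousAt_rpow_const 0 H (Or.inr hH0.le)
      · exact continuousAt_const.mul
          (Real.continuousAt_rpow_const 0 (1 - H) (Or.inr (by linarith)))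
    have he : g = fun d : ℝ => d ^ H + 2 * θ₀ ^ (H - 1) * d ^ (1 - H) := funext hg_app
    rw [he]; exact this
  have hg0 : g 0 = 0 := by
    rw [hg_app]
    rw [Real.zero_rpow hH0.ne', Real.zero_rpow (by intro h; rw [sub_eq_zero] at h; linarith)]
    ring
  have hnhds : g ⁻¹' Set.Iio u ∈ nhds (0:ℝ) := by
    have h5 := hgc.tendsto
    rw [hg0] at h5
    exact h5 (Iio_mem_nhds hu0)
  obtain ⟨r, hr0, hball⟩ := Metric.mem_nhds_iff.1 hnhds
  obtain ⟨δ, hδ_def⟩ : ∃ x : ℝ, x = min (r / 2) (θ₀ / 2) := ⟨_, rfl⟩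
  have hδ0 : 0 < δ := hδ_def ▸ lt_min (by linarith) (by linarith)
  have hδθ₀ : δ < θ₀ := by
    rw [hδ_def]; exact lt_of_le_of_lt (min_le_right _ _) (by linarith)
  have hδ1 : δ ≤ 1 := by
    rw [hδ_def]
    have := min_le_right (r / 2) (θ₀ / 2); linarith
  have hgδ : g δ < u := by
    have h5 : δ ∈ Metric.ball (0:ℝ) r := by
      rw [Metric.mem_ball, Real.dist_eq, sub_zero, abs_of_pos hδ0, hδ_def]
      exact lt_of_le_of_lt (min_le_left _ _) (by linarith)
    exact hball h5
  -- Piece A : θ ≤ δ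
  have hA : ∀ β θ, 0 ≤ θ → θ ≤ δ → β₀ ^ 2 * u ^ 2 / 2 ≤ Q β θ := by
    intro β θ hθ0' hθδ
    rcases eq_or_lt_of_le hθ0' with h0 | h0
    · have hv' : v θ = 0 := by rw [hv_app, ← h0]; exact Real.zero_rpow hH0.ne'
      have hw' : w θ = u := by rw [hw_app, ← h0, hu_def, sub_zero, abs_of_pos hθ₀0]
      rw [hQ_app, hv', hw']
      nlinarith [mul_pos (pow_pos hu0 2) (pow_pos (abs_pos.2 hβ₀) 2), sq_abs β₀]
    · have hθθ₀ : θ < θ₀ := lt_of_le_of_lt hθδ hδθ₀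
      have hvp : 0 < v θ := hv_app θ ▸ Real.rpow_pos_of_pos h0 H
      have hwu : w θ ≤ u := by
        rw [hw_app, hu_def, abs_of_nonneg (by linarith)]
        exact hv_mono (by linarith) (by linarith)
      obtain ⟨c, hc_def⟩ : ∃ x : ℝ, x = θ₀ ^ (H - 1) := ⟨_, rfl⟩
      have hc0 : 0 ≤ c := hc_def ▸ Real.rpow_nonneg hθ₀0.le _
      have e1 : c * θ₀ = u := by
        rw [hc_def, hu_def, ← Real.rpow_add_one hθ₀0.ne' (H - 1)]
        congr 1; ring
      have hwl : u - c * θ ≤ w θ := by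
        have h2 : c ≤ (θ₀ - θ) ^ (H - 1) := by
          rw [hc_def]
          exact Real.rpow_le_rpow_of_nonpos (by linarith) (by linarith) (by linarith)
        have h3 : c * (θ₀ - θ) ≤ (θ₀ - θ) ^ (H - 1) * (θ₀ - θ) :=
          mul_le_mul_of_nonneg_right h2 (by linarith)
        have h4 : (θ₀ - θ) ^ (H - 1) * (θ₀ - θ) = (θ₀ - θ) ^ H := by
          rw [← Real.rpow_add_one (by intro hh; nlinarith : θ₀ - θ ≠ 0) (H - 1)]
          congr 1; ring
        have h5 : w θ = (θ₀ - θ) ^ H := by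
          rw [hw_app, abs_of_nonneg (by linarith)]
        nlinarith [e1]
      have hθv : θ ≤ δ ^ (1 - H) * v θ := by
        have e2 : θ = θ ^ (1 - H) * θ ^ H := by
          rw [← Real.rpow_add h0, show (1:ℝ) - H + H = 1 by ring, Real.rpow_one]
        have h6 : θ ^ (1 - H) ≤ δ ^ (1 - H) :=
          Real.rpow_le_rpow h0.le hθδ (by linarith)
        rw [hv_app]
        calc θ = θ ^ (1 - H) * θ ^ H := e2
          _ ≤ δ ^ (1 - H) * θ ^ H :=
            mul_le_mul_of_nonneg_right h6 (Real.rpow_nonneg h0.le H)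
      have hvδ : v θ ≤ δ ^ H := by rw [hv_app]; exact hv_mono h0.le hθδ
      have hDle : u ^ 2 + v θ ^ 2 - w θ ^ 2 ≤ v θ * u := by
        have h7 : u - w θ ≤ c * (δ ^ (1 - H) * v θ) := by
          calc u - w θ ≤ c * θ := by linarith [hwl]
            _ ≤ c * (δ ^ (1 - H) * v θ) := mul_le_mul_of_nonneg_left hθv hc0
        have h8 : (u - w θ) * (u + w θ) ≤ c * (δ ^ (1 - H) * v θ) * 2 := by
          have hw0' := hw0 θ
          nlinarith [h7, mul_nonneg hc0 (mul_nonneg (Real.rpow_nonneg hδ0.le (1 - H)) hvp.le)]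
        have h9 : u ^ 2 + v θ ^ 2 - w θ ^ 2 ≤ v θ * (δ ^ H + 2 * c * δ ^ (1 - H)) := by
          nlinarith [h8, hvδ, hvp]
        have h10 : v θ * (δ ^ H + 2 * c * δ ^ (1 - H)) ≤ v θ * u := by
          apply mul_le_mul_of_nonneg_left _ hvp.le
          have h11 := hgδ
          rw [hg_app] at h11
          rw [hc_def]
          linarith
        linarith
      have hD0 : 0 ≤ u ^ 2 + v θ ^ 2 - w θ ^ 2 := by nlinarith [hwu, hw0 θ, hvp]
      have hD2 : (u ^ 2 + v θ ^ 2 - w θ ^ 2) ^ 2 ≤ (v θ * u) ^ 2 := by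
        nlinarith [hDle, hD0]
      rw [hQ_app]
      nlinarith [sq_nonneg (2 * v θ ^ 2 * β - β₀ * (u ^ 2 + v θ ^ 2 - w θ ^ 2)),
        mul_nonneg (sq_nonneg β₀) (sub_nonneg.2 hD2), pow_pos hvp 2,
        mul_pos (mul_pos (pow_pos hvp 2) (pow_pos hu0 2)) (pow_pos (abs_pos.2 hβ₀) 2),
        sq_abs β₀]
  -- Piece B : δ ≤ θ and |β| large
  obtain ⟨c2, hc2_def⟩ : ∃ x : ℝ, x = δ ^ H := ⟨_, rfl⟩
  have hc2p : 0 < c2 := hc2_def ▸ Real.rpow_pos_of_pos hδ0 H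
  have hc21 : c2 ≤ 1 := hc2_def ▸ Real.rpow_le_one hδ0.le hδ1 hH0.le
  obtain ⟨R, hR_def⟩ : ∃ x : ℝ, x = (2 * |β₀| + 1) / c2 ^ 2 := ⟨_, rfl⟩
  have hc2R : c2 ^ 2 * R = 2 * |β₀| + 1 := by
    rw [hR_def]; field_simp
  have hR1 : 1 ≤ R := by nlinarith [hc2R, hc21, hc2p, abs_nonneg β₀, mul_pos hc2p hc2p]
  have hB : ∀ β θ, δ ≤ θ → θ ≤ 1 → R ≤ |β| → 1 ≤ Q β θ := by
    intro β θ hθδ hθ1 hβR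
    have hθ0' : 0 ≤ θ := le_trans hδ0.le hθδ
    have hvc2 : c2 ≤ v θ := by rw [hc2_def, hv_app]; exact hv_mono hδ0.le hθδ
    have hv1' := hv1 θ hθ0' hθ1
    have hw1' := hw1 θ hθ0' hθ1
    have hw0' := hw0 θ
    have hv0' := hv0 θ hθ0'
    have hDabs : |u ^ 2 + v θ ^ 2 - w θ ^ 2| ≤ 2 := by
      rw [abs_le]
      constructor <;> nlinarith [hu0, hu1]
    have habs : β * β₀ * (u ^ 2 + v θ ^ 2 - w θ ^ 2) ≤ |β| * |β₀| * 2 := by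
      calc β * β₀ * (u ^ 2 + v θ ^ 2 - w θ ^ 2)
          ≤ |β * β₀ * (u ^ 2 + v θ ^ 2 - w θ ^ 2)| := le_abs_self _
        _ = |β| * |β₀| * |u ^ 2 + v θ ^ 2 - w θ ^ 2| := by rw [abs_mul, abs_mul]
        _ ≤ |β| * |β₀| * 2 :=
            mul_le_mul_of_nonneg_left hDabs (mul_nonneg (abs_nonneg _) (abs_nonneg _))
    have hβ1 : 1 ≤ |β| := le_trans hR1 hβR
    have hstep : 1 ≤ c2 ^ 2 * |β| ^ 2 - 2 * |β₀| * |β| := by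
      have h11 : c2 ^ 2 * R ≤ c2 ^ 2 * |β| := mul_le_mul_of_nonneg_left hβR (by positivity)
      nlinarith [hβ1]
    rw [hQ_app]
    nlinarith [sq_nonneg (u * β₀), sq_abs β,
      mul_le_mul_of_nonneg_right (mul_le_mul hvc2 hvc2 hc2p.le hv0') (sq_nonneg β),
      habs, hstep]
  -- continuity of Φ as a map on the product space
  set F : ℝ × ℝ × ℝ → ℝ := fun p => Φ p.1 p.2.1 p.2.2 with hF_def
  have hradj : Continuous fun x : ℝ => x ^ (2 * H) := by
    rw [continuous_iff_continuousAt]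
    intro x
    exact Real.continuousAt_rpow_const x _ (Or.inr (by positivity))
  have hFc : Continuous F := by
    have hFeq : F = fun p : ℝ × ℝ × ℝ => (α₀ - p.1) ^ 2 + (β₀ - p.2.1) ^ 2 * θ₀ ^ (2 * H)
        + p.2.1 * β₀ * |θ₀ - p.2.2| ^ (2 * H)
        + p.2.1 * (β₀ - p.2.1) * (θ₀ ^ (2 * H) - p.2.2 ^ (2 * H)) :=
      funext fun p => hΦ _ _ _
    rw [hFeq]
    have c1 : Continuous fun p : ℝ × ℝ × ℝ => p.1 := continuous_fst
    have cb : Continuous fun p : ℝ × ℝ × ℝ => p.2.1 := continuous_snd.fst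
    have ct : Continuous fun p : ℝ × ℝ × ℝ => p.2.2 := continuous_snd.snd
    apply Continuous.add
    apply Continuous.add
    apply Continuous.add
    · exact (continuous_const.sub c1).pow 2
    · exact ((continuous_const.sub cb).pow 2).mul continuous_const
    · exact (cb.mul continuous_const).mul (hradj.comp ((continuous_const.sub ct).abs))
    · exact (cb.mul (continuous_const.sub cb)).mul
        (continuous_const.sub (hradj.comp ct))
  -- the compact leftover set
  set Box : Set (ℝ × ℝ × ℝ) :=
    Set.Icc (α₀ - 1) (α₀ + 1) ×ˢ (Set.Icc (-R) R ×ˢ Set.Icc δ 1) with hBox_def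
  set K : Set (ℝ × ℝ × ℝ) := Box \ G with hK_def
  have hKc : IsCompact K :=
    (isCompact_Icc.prod (isCompact_Icc.prod isCompact_Icc)).diff hG
  obtain ⟨m₁, hm₁_def⟩ : ∃ x : ℝ, x = min (β₀ ^ 2 * u ^ 2 / 2) 1 := ⟨_, rfl⟩
  have hm₁0 : 0 < m₁ := hm₁_def ▸ lt_min (by positivity) one_pos
  -- the bulk dichotomy
  have hbulk : ∀ α β θ, 0 ≤ θ → θ ≤ 1 → (α, β, θ) ∉ G →
      (α, β, θ) ∈ K ∨ m₁ ≤ Φ α β θ := by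
    intro α β θ h0θ h1θ hnG
    rcases le_or_gt θ δ with hc | hc
    · right
      rw [hrw α β θ h0θ, hm₁_def]
      have h5 := hA β θ h0θ hc
      have hm := min_le_left (β₀ ^ 2 * u ^ 2 / 2) 1
      nlinarith [sq_nonneg (α₀ - α)]
    · rcases le_or_gt 1 |α₀ - α| with ha | ha
      · right
        rw [hrw α β θ h0θ, hm₁_def]
        have h1 : 1 ≤ (α₀ - α) ^ 2 := by nlinarith [sq_abs (α₀ - α)]
        have h5 := hQnn β θ h0θ
        have hm := min_le_right (β₀ ^ 2 * u ^ 2 / 2) 1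
        linarith
      · rcases le_or_gt R |β| with hb | hb
        · right
          rw [hrw α β θ h0θ, hm₁_def]
          have h5 := hB β θ hc.le h1θ hb
          have hm := min_le_right (β₀ ^ 2 * u ^ 2 / 2) 1
          nlinarith [sq_nonneg (α₀ - α)]
        · left
          rw [abs_lt] at ha hb
          refine ⟨⟨⟨by linarith [ha.1], by linarith [ha.2]⟩,
            ⟨by linarith [hb.1], by linarith [hb.2]⟩, ⟨hc.le, h1θ⟩⟩, hnG⟩
  by_cases hKne : K.Nonempty
  · obtain ⟨x₀, hx₀K, hx₀min⟩ := hKc.exists_isMinOn hKne hFc.continuousOn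
    obtain ⟨⟨hxa, hxb, hxt⟩, hxG⟩ := hx₀K
    have hFx₀ : 0 < F x₀ := by
      obtain ⟨hF0, hFiff⟩ := part1 x₀.1 x₀.2.1 x₀.2.2 ⟨le_trans hδ0.le hxt.1, hxt.2⟩
      rcases eq_or_lt_of_le hF0 with h | h
      · exfalso
        have hx : (x₀.1, x₀.2.1, x₀.2.2) = (α₀, β₀, θ₀) := hFiff.1 h.symm
        have hx' : x₀ = (α₀, β₀, θ₀) := hx
        rw [hx'] at hxG
        exact hxG hmemG
      · exact h
    refine ⟨min m₁ (F x₀), lt_min hm₁0 hFx₀, ?_⟩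
    intro α β θ hθmem hnG
    obtain ⟨h0θ, h1θ⟩ := hθmem
    rcases hbulk α β θ h0θ h1θ hnG with hmem | hge
    · have h5 := hx₀min hmem
      calc min m₁ (F x₀) ≤ F x₀ := min_le_right _ _
        _ ≤ F (α, β, θ) := h5
        _ = Φ α β θ := rfl
    · exact le_trans (min_le_left _ _) hge
  · refine ⟨m₁, hm₁0, ?_⟩
    intro α β θ hθmem hnG
    obtain ⟨h0θ, h1θ⟩ := hθmem
    rcases hbulk α β θ h0θ h1θ hnG with hmem | hge
    · exact absurd ⟨_, hmem⟩ hKne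
    · exact hge
end

section
/- Uniform drift localization limit (Section 7.3): Fix H ∈ (0,1), α₀ ∈ ℝ, β₀ ∈ ℝ, θ₀ ∈ (0,1), and define Φ(α, β, θ) = (α₀ − α)² + (β₀ − β)² θ₀^(2H) + β β₀ |θ₀ − θ|^(2H) + β (β₀ − β)(θ₀^(2H) − |θ|^(2H)) for (α, β, θ) ∈ ℝ³. Then for every K > 0, sup over h = (h₁, h₂, h₃) ∈ [−K, K]³ of | n · Φ(α₀ + h₁/√n, β₀ + h₂/√n, θ₀ + n^(−1/(2H)) h₃) − (h₁² + h₂² θ₀^(2H) + β₀² |h₃|^(2H)) | converges to 0 as n → ∞. -/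
open Filter

private lemma rpow_lipschitz_aux {H θ₀ : ℝ} (hH0 : 0 < H) (hθ : 0 < θ₀) :
    ∀ x ∈ Set.Icc (θ₀/2) 2, ∀ y ∈ Set.Icc (θ₀/2) 2,
      |y ^ (2*H) - x ^ (2*H)| ≤ (2*H * ((θ₀/2) ^ (2*H-1) + 2 ^ (2*H-1))) * |y - x| := by
  intro x hx y hy
  have key : ∀ z ∈ Set.Icc (θ₀/2) 2, HasDerivWithinAt (fun t : ℝ => t ^ (2*H))
      ((2*H) * z ^ (2*H-1)) (Set.Icc (θ₀/2) 2) z := by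
    intro z hz
    have hz0 : (0:ℝ) < z := lt_of_lt_of_le (by positivity) hz.1
    exact (Real.hasDerivAt_rpow_const (Or.inl hz0.ne')).hasDerivWithinAt
  have bound : ∀ z ∈ Set.Icc (θ₀/2) 2,
      ‖(2*H) * z ^ (2*H-1)‖ ≤ 2*H * ((θ₀/2) ^ (2*H-1) + 2 ^ (2*H-1)) := by
    intro z hz
    have hz0 : (0:ℝ) < z := lt_of_lt_of_le (by positivity) hz.1
    have hznn : z ^ (2*H-1) ≤ (θ₀/2) ^ (2*H-1) + 2 ^ (2*H-1) := by
      rcases le_or_gt 0 (2*H-1) with hp | hp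
      · have h1 : z ^ (2*H-1) ≤ (2:ℝ) ^ (2*H-1) := Real.rpow_le_rpow hz0.le hz.2 hp
        have h2 : (0:ℝ) ≤ (θ₀/2) ^ (2*H-1) := Real.rpow_nonneg (by positivity) _
        linarith
      · have h1 : z ^ (2*H-1) ≤ (θ₀/2) ^ (2*H-1) :=
          Real.rpow_le_rpow_of_nonpos (by positivity) hz.1 hp.le
        have h2 : (0:ℝ) ≤ (2:ℝ) ^ (2*H-1) := Real.rpow_nonneg (by norm_num) _
        linarith
    rw [Real.norm_eq_abs, abs_mul, abs_of_nonneg (by positivity : (0:ℝ) ≤ 2*H),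
      abs_of_nonneg (Real.rpow_nonneg hz0.le _)]
    have h2H : (0:ℝ) ≤ 2*H := by positivity
    nlinarith [Real.rpow_nonneg hz0.le (2*H-1)]
  have := (convex_Icc (θ₀/2) 2).norm_image_sub_le_of_norm_hasDerivWithin_le key bound hx hy
  simpa [Real.norm_eq_abs] using this

/-- Uniform drift localization limit: for every `K > 0`,
`sup_{h ∈ [−K,K]³} | n Φ(α₀ + h₁/√n, β₀ + h₂/√n, θ₀ + n^(−1/(2H)) h₃)
  − (h₁² + h₂² θ₀^(2H) + β₀² |h₃|^(2H)) | → 0`. -/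
theorem drift_localization_uniform_limit
    (H : ℝ) (hH : H ∈ Set.Ioo (0:ℝ) 1)
    (α₀ β₀ θ₀ : ℝ) (hθ₀ : θ₀ ∈ Set.Ioo (0:ℝ) 1)
    (Φ : ℝ → ℝ → ℝ → ℝ)
    (hΦ : ∀ α β θ, Φ α β θ = (α₀ - α) ^ 2 + (β₀ - β) ^ 2 * θ₀ ^ (2 * H)
        + β * β₀ * |θ₀ - θ| ^ (2 * H) + β * (β₀ - β) * (θ₀ ^ (2 * H) - |θ| ^ (2 * H)))
    (K : ℝ) (hK : 0 < K) :
    Tendsto (fun n : ℕ =>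
        ⨆ h : Set.Icc (-K) K × Set.Icc (-K) K × Set.Icc (-K) K,
          |(n : ℝ) * Φ (α₀ + (h.1 : ℝ) / Real.sqrt n) (β₀ + (h.2.1 : ℝ) / Real.sqrt n)
              (θ₀ + (n : ℝ) ^ (-(1 : ℝ) / (2 * H)) * (h.2.2 : ℝ))
            - ((h.1 : ℝ) ^ 2 + (h.2.1 : ℝ) ^ 2 * θ₀ ^ (2 * H)
                + β₀ ^ 2 * |(h.2.2 : ℝ)| ^ (2 * H))|)
      atTop (nhds 0) := by
  obtain ⟨hH0, hH1⟩ := hH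
  obtain ⟨hθ0, hθ1⟩ := hθ₀
  haveI : Nonempty (Set.Icc (-K) K) := ⟨⟨0, by constructor <;> linarith⟩⟩
  set M : ℝ := 2*H * ((θ₀/2) ^ (2*H-1) + 2 ^ (2*H-1)) with hM
  have hMnn : 0 ≤ M := by positivity
  set r : ℕ → ℝ := fun n => (n : ℝ) ^ (-(1:ℝ) / (2*H)) with hr
  have hrnn : ∀ n, 0 ≤ r n := fun n => Real.rpow_nonneg (Nat.cast_nonneg n) _
  set b : ℕ → ℝ := fun n =>
    |β₀| * K * K ^ (2*H) * (Real.sqrt n)⁻¹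
      + (|β₀| + K) * K * (M * K) * (Real.sqrt n * r n) with hb
  -- the bound sequence tends to 0
  have hb0 : Tendsto b atTop (nhds 0) := by
    have h1 : Tendsto (fun n : ℕ => (Real.sqrt n)⁻¹) atTop (nhds 0) := by
      have base : Tendsto (fun x : ℝ => x ^ (-(1/2 : ℝ))) atTop (nhds 0) :=
        tendsto_rpow_neg_atTop (by norm_num)
      refine (base.comp tendsto_natCast_atTop_atTop).congr ?_
      intro n
      simp only [Function.comp]
      rw [Real.rpow_neg (Nat.cast_nonneg n), ← Real.sqrt_eq_rpow]
    have h2 : Tendsto (fun n : ℕ => Real.sqrt n * r n) atTop (nhds 0) := by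
      have hy : (0:ℝ) < 1/(2*H) - 1/2 := by
        rw [sub_pos, div_lt_div_iff₀ (by norm_num) (by positivity)]
        linarith
      have base : Tendsto (fun x : ℝ => x ^ (-(1/(2*H) - 1/2))) atTop (nhds 0) :=
        tendsto_rpow_neg_atTop hy
      refine (base.comp tendsto_natCast_atTop_atTop).congr' ?_
      filter_upwards [eventually_ge_atTop 1] with n hn
      have hnpos : (0:ℝ) < (n:ℝ) := by exact_mod_cast Nat.pos_of_ne_zero (by omega)
      simp only [Function.comp, hr]
      rw [Real.sqrt_eq_rpow, ← Real.rpow_add hnpos]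
      congr 1
      field_simp
      ring
    have := (h1.const_mul (|β₀| * K * K ^ (2*H))).add
      (h2.const_mul ((|β₀| + K) * K * (M * K)))
    simpa [hb, mul_comm] using this
  refine squeeze_zero' ?_ ?_ hb0
  · filter_upwards with n
    exact Real.iSup_nonneg (fun h => abs_nonneg _)
  · -- eventually the sup is bounded by b n
    have hrlim : Tendsto r atTop (nhds 0) := by
      have hy : (0:ℝ) < 1/(2*H) := by positivity
      refine ((tendsto_rpow_neg_atTop hy).comp
        (tendsto_natCast_atTop_atTop (R := ℝ))).congr ?_
      intro n
      simp only [Function.comp, hr, neg_div]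
    have hev : ∀ᶠ n : ℕ in atTop, r n * K ≤ θ₀ / 2 := by
      have hpos : (0:ℝ) < (θ₀/2)/K := by positivity
      filter_upwards [hrlim.eventually_lt_const hpos] with n hn
      rw [← le_div_iff₀ hK]
      exact hn.le
    filter_upwards [hev, eventually_ge_atTop 1] with n hrK hn1
    refine ciSup_le ?_
    rintro ⟨⟨h₁, hh₁⟩, ⟨h₂, hh₂⟩, ⟨h₃, hh₃⟩⟩
    simp only
    have hn0 : (0:ℝ) < (n:ℝ) := by exact_mod_cast Nat.pos_of_ne_zero (by omega)
    set s : ℝ := Real.sqrt n with hs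
    have hs1 : (1:ℝ) ≤ s := by
      rw [hs, show (1:ℝ) = Real.sqrt 1 by simp]
      exact Real.sqrt_le_sqrt (by exact_mod_cast hn1)
    have hs0 : (0:ℝ) < s := lt_of_lt_of_le one_pos hs1
    have hss : s * s = (n:ℝ) := Real.mul_self_sqrt hn0.le
    have hb1 : |h₁| ≤ K := abs_le.2 ⟨hh₁.1, hh₁.2⟩
    have hb2 : |h₂| ≤ K := abs_le.2 ⟨hh₂.1, hh₂.2⟩
    have hb3 : |h₃| ≤ K := abs_le.2 ⟨hh₃.1, hh₃.2⟩
    have hδ : |r n * h₃| ≤ θ₀ / 2 := by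
      rw [abs_mul, abs_of_nonneg (hrnn n)]
      calc r n * |h₃| ≤ r n * K := mul_le_mul_of_nonneg_left hb3 (hrnn n)
        _ ≤ θ₀/2 := hrK
    set θ : ℝ := θ₀ + r n * h₃ with hθdef
    have habs := abs_le.1 hδ
    have hθmem : θ ∈ Set.Icc (θ₀/2) 2 := by
      constructor
      · simp only [hθdef]; linarith [habs.1]
      · simp only [hθdef]; linarith [habs.2]
    have hθpos : 0 < θ := lt_of_lt_of_le (by positivity) hθmem.1
    have hθ₀mem : θ₀ ∈ Set.Icc (θ₀/2) 2 := ⟨by linarith, by linarith⟩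
    -- rpow facts
    have hrpow : r n ^ (2*H) = (n:ℝ)⁻¹ := by
      rw [hr]
      simp only
      rw [← Real.rpow_mul hn0.le,
        show (-(1:ℝ)/(2*H)) * (2*H) = -1 by field_simp,
        Real.rpow_neg_one]
    have habsθ : |θ| = θ := abs_of_pos hθpos
    have habsd : |θ₀ - θ| = r n * |h₃| := by
      rw [hθdef, show θ₀ - (θ₀ + r n * h₃) = -(r n * h₃) by ring, abs_neg, abs_mul,
        abs_of_nonneg (hrnn n)]
    have hd : |θ₀ - θ| ^ (2*H) = (n:ℝ)⁻¹ * |h₃| ^ (2*H) := by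
      rw [habsd, Real.mul_rpow (hrnn n) (abs_nonneg _), hrpow]
    -- key algebraic identity
    have key : (n:ℝ) * Φ (α₀ + h₁/s) (β₀ + h₂/s) θ
        - (h₁^2 + h₂^2 * θ₀^(2*H) + β₀^2 * |h₃|^(2*H))
        = h₂/s * β₀ * |h₃|^(2*H)
          - (β₀ + h₂/s) * h₂ * s * (θ₀^(2*H) - θ^(2*H)) := by
      rw [hΦ, hd, habsθ, ← hss]
      field_simp
      ring
    have hP : |h₃| ^ (2*H) ≤ K ^ (2*H) :=
      Real.rpow_le_rpow (abs_nonneg _) hb3 (by positivity)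
    have hPnn : 0 ≤ |h₃| ^ (2*H) := Real.rpow_nonneg (abs_nonneg _) _
    have hD : |θ₀ ^ (2*H) - θ ^ (2*H)| ≤ M * (r n * K) := by
      calc |θ₀ ^ (2*H) - θ ^ (2*H)| ≤ M * |θ₀ - θ| :=
            rpow_lipschitz_aux hH0 hθ0 θ hθmem θ₀ hθ₀mem
        _ = M * (r n * |h₃|) := by rw [habsd]
        _ ≤ M * (r n * K) :=
            mul_le_mul_of_nonneg_left (mul_le_mul_of_nonneg_left hb3 (hrnn n)) hMnn
    have t1 : |h₂/s * β₀ * |h₃|^(2*H)| ≤ |β₀| * K * K ^ (2*H) * s⁻¹ := by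
      rw [abs_mul, abs_mul, abs_div, abs_of_pos hs0, abs_of_nonneg hPnn, div_eq_mul_inv]
      calc |h₂| * s⁻¹ * |β₀| * |h₃|^(2*H) ≤ K * s⁻¹ * |β₀| * K^(2*H) := by
            gcongr
        _ = |β₀| * K * K^(2*H) * s⁻¹ := by ring
    have t2 : |(β₀ + h₂/s) * h₂ * s * (θ₀^(2*H) - θ^(2*H))|
        ≤ (|β₀| + K) * K * (M * K) * (s * r n) := by
      rw [abs_mul, abs_mul, abs_mul, abs_of_pos hs0]
      have hβ : |β₀ + h₂/s| ≤ |β₀| + K := by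
        calc |β₀ + h₂/s| ≤ |β₀| + |h₂/s| := abs_add_le _ _
          _ ≤ |β₀| + K := by
              have : |h₂/s| ≤ |h₂| := by
                rw [abs_div, abs_of_pos hs0]
                exact div_le_self (abs_nonneg _) hs1
              linarith
      calc |β₀ + h₂/s| * |h₂| * s * |θ₀^(2*H) - θ^(2*H)|
          ≤ (|β₀| + K) * K * s * (M * (r n * K)) := by
            gcongr
        _ = (|β₀| + K) * K * (M * K) * (s * r n) := by ring
    calc |(n:ℝ) * Φ (α₀ + h₁/s) (β₀ + h₂/s) θ
          - (h₁^2 + h₂^2 * θ₀^(2*H) + β₀^2 * |h₃|^(2*H))|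
        = |h₂/s * β₀ * |h₃|^(2*H)
            - (β₀ + h₂/s) * h₂ * s * (θ₀^(2*H) - θ^(2*H))| := by rw [key]
      _ ≤ |h₂/s * β₀ * |h₃|^(2*H)|
            + |(β₀ + h₂/s) * h₂ * s * (θ₀^(2*H) - θ^(2*H))| := abs_sub _ _
      _ ≤ b n := by
            rw [hb]
            simp only
            rw [← hs]
            exact add_le_add t1 t2
end
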